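/- arXiv:2605.26547 — 6 statements merged into one kernel-verified Lean document; each statement's English description precedes it below -/
import Mathlib

section
/- Let f: ℝ^d → ℝ be differentiable with L-Lipschitz gradient. Fix x_t ∈ ℝ^d, a nonzero vector u_t ∈ ℝ^d, a stepsize η_t > 0, and α > 0. Define β_t = (f(x_t + α u_t) − f(x_t − α u_t))/(2α) − u_t^⊤ ∇f(x_t), g(x_t) = ((f(x_t + α u_t) − f(x_t − α u_t))/(2α)) u_t, and x_{t+1} = x_t − η_t g(x_t). Then f(x_{t+1}) ≤ f(x_t) − (η_t (u_t^⊤ ∇f(x_t))²)/2 + L η_t² ‖u_t‖² (u_t^⊤ ∇f(x_t))² + Δ_{α,t}, where Δ_{α,t} = (η_t β_t²)/2 + L η_t² β_t² ‖u_t‖². -/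
open MeasureTheory Real Finset
open scoped ENNReal NNReal RealInnerProductSpace BigOperators

/-- Descent lemma: quadratic upper bound for a function with `L`-Lipschitz gradient. -/
lemma descent_aux {d : ℕ} (f : EuclideanSpace ℝ (Fin d) → ℝ) (L : ℝ) (hL : 0 ≤ L)
    (hdiff : Differentiable ℝ f)
    (hlip : ∀ x y, ‖gradient f y - gradient f x‖ ≤ L * ‖y - x‖)
    (x v : EuclideanSpace ℝ (Fin d)) :
    f (x + v) ≤ f x + ⟪gradient f x, v⟫ + L / 2 * ‖v‖ ^ 2 := by
  set ψ : ℝ → ℝ := fun t => f (x + t • v) - t * ⟪gradient f x, v⟫ - L * t ^ 2 / 2 * ‖v‖ ^ 2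
    with hψ
  have hline : ∀ t : ℝ, HasDerivAt (fun s : ℝ => x + s • v) v t := by
    intro t
    simpa using ((hasDerivAt_id t).smul_const v).const_add x
  have hfd : ∀ y, HasFDerivAt f (InnerProductSpace.toDual ℝ _ (gradient f y)) y := fun y =>
    (hdiff y).hasGradientAt.hasFDerivAt
  have hψd : ∀ t : ℝ, HasDerivAt ψ
      (⟪gradient f (x + t • v), v⟫ - ⟪gradient f x, v⟫ - L * t * ‖v‖ ^ 2) t := by
    intro t
    have h1 : HasDerivAt (fun s : ℝ => f (x + s • v)) ⟪gradient f (x + t • v), v⟫ t := by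
      have := (hfd (x + t • v)).comp_hasDerivAt t (hline t)
      simpa [InnerProductSpace.toDual_apply_apply, Function.comp_def] using this
    have h2 : HasDerivAt (fun s : ℝ => s * ⟪gradient f x, v⟫) ⟪gradient f x, v⟫ t := by
      simpa using (hasDerivAt_id t).mul_const ⟪gradient f x, v⟫
    have h3 : HasDerivAt (fun s : ℝ => L * s ^ 2 / 2 * ‖v‖ ^ 2) (L * t * ‖v‖ ^ 2) t := by
      have := ((hasDerivAt_pow 2 t).const_mul L).div_const 2 |>.mul_const (‖v‖ ^ 2)
      refine this.congr_deriv ?_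
      simp only [Nat.cast_ofNat, show (2:ℕ) - 1 = 1 from rfl, pow_one]
      ring
    exact (h1.sub h2).sub h3
  have hanti : AntitoneOn ψ (Set.Icc 0 1) := by
    apply antitoneOn_of_deriv_nonpos (convex_Icc 0 1)
    · exact (Differentiable.continuous fun t => (hψd t).differentiableAt).continuousOn
    · intro t ht
      exact (hψd t).differentiableAt.differentiableWithinAt
    · intro t ht
      rw [(hψd t).deriv]
      have ht0 : 0 ≤ t := (Set.mem_Ioo.mp (by simpa using ht)).1.le
      have hb : ⟪gradient f (x + t • v) - gradient f x, v⟫ ≤ L * t * ‖v‖ ^ 2 := by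
        calc ⟪gradient f (x + t • v) - gradient f x, v⟫
            ≤ ‖gradient f (x + t • v) - gradient f x‖ * ‖v‖ := real_inner_le_norm _ _
          _ ≤ (L * ‖(x + t • v) - x‖) * ‖v‖ := by
              apply mul_le_mul_of_nonneg_right (hlip x (x + t • v)) (norm_nonneg _)
          _ = L * t * ‖v‖ ^ 2 := by
              simp [norm_smul, abs_of_nonneg ht0]
              ring
      have := hb
      rw [inner_sub_left] at this
      linarith
  have h01 : ψ 1 ≤ ψ 0 := hanti (by norm_num) (by norm_num) (by norm_num)
  simp only [hψ, one_smul, zero_smul, add_zero, one_pow, one_mul, zero_pow, mul_zero,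
    zero_mul, sub_zero, zero_div] at h01
  linarith

/-- **One-step descent for smooth objectives (Lemma 1 / stmt 6).**
If `f` is differentiable with `L`-Lipschitz gradient, then one step of the two-point
zeroth-order update satisfies the stated descent inequality. -/
theorem one_step_descent
    {d : ℕ} (hd : 1 ≤ d)
    (f : EuclideanSpace ℝ (Fin d) → ℝ) (L : ℝ) (hL : 0 < L)
    (hdiff : Differentiable ℝ f)
    (hlip : ∀ x y, ‖gradient f y - gradient f x‖ ≤ L * ‖y - x‖)
    (xt ut : EuclideanSpace ℝ (Fin d)) (hut : ut ≠ 0)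
    (ηt α : ℝ) (hη : 0 < ηt) (hα : 0 < α)
    (βt : ℝ)
    (hβ : βt = (f (xt + α • ut) - f (xt - α • ut)) / (2 * α) - ⟪ut, gradient f xt⟫)
    (g : EuclideanSpace ℝ (Fin d))
    (hg : g = ((f (xt + α • ut) - f (xt - α • ut)) / (2 * α)) • ut)
    (xt1 : EuclideanSpace ℝ (Fin d)) (hx1 : xt1 = xt - ηt • g)
    (Δαt : ℝ) (hΔ : Δαt = ηt * βt ^ 2 / 2 + L * ηt ^ 2 * βt ^ 2 * ‖ut‖ ^ 2) :
    f xt1 ≤ f xt - ηt * ⟪ut, gradient f xt⟫ ^ 2 / 2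
      + L * ηt ^ 2 * ‖ut‖ ^ 2 * ⟪ut, gradient f xt⟫ ^ 2 + Δαt := by
  set a : ℝ := ⟪ut, gradient f xt⟫ with ha
  set c : ℝ := (f (xt + α • ut) - f (xt - α • ut)) / (2 * α) with hc
  have hcab : c = a + βt := by rw [hβ]; ring
  have hv : xt1 = xt + (-(ηt * c)) • ut := by
    rw [hx1, hg, hc, smul_smul]
    module
  have key := descent_aux f L hL.le hdiff hlip xt ((-(ηt * c)) • ut)
  rw [← hv] at key
  have hinner : ⟪gradient f xt, (-(ηt * c)) • ut⟫ = -(ηt * c) * a := by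
    rw [real_inner_smul_right, ha, real_inner_comm]
  have hnorm : ‖(-(ηt * c)) • ut‖ ^ 2 = (ηt * c) ^ 2 * ‖ut‖ ^ 2 := by
    rw [norm_smul]
    simp [mul_pow]
  rw [hinner, hnorm] at key
  rw [hΔ, hcab] at *
  have hn2 : (0:ℝ) ≤ ‖ut‖ ^ 2 := sq_nonneg _
  nlinarith [sq_nonneg (a + βt), sq_nonneg (a - βt), mul_nonneg (mul_nonneg hL.le (sq_nonneg ηt)) hn2, mul_nonneg hη.le (sq_nonneg (a + βt)), mul_nonneg (mul_nonneg (mul_nonneg hL.le (sq_nonneg ηt)) hn2) (sq_nonneg (a - βt)), mul_nonneg hη.le (sq_nonneg (a - βt))]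
end

section
/- Let f: ℝ^d → ℝ be differentiable with L-Lipschitz gradient and μ-strongly convex with minimizer x*. Let x_0 ∈ ℝ^d, α > 0, and let u_0, …, u_{T−1} ∈ ℝ^d be nonzero vectors. Define the iterates x_{t+1} = x_t − η_t g(x_t) with η_t = 1/(4L‖u_t‖²), g(x_t) = ((f(x_t + α u_t) − f(x_t − α u_t))/(2α)) u_t, β_t = (f(x_t + α u_t) − f(x_t − α u_t))/(2α) − u_t^⊤ ∇f(x_t), and Δ_{α,t} = (η_t β_t²)/2 + L η_t² β_t² ‖u_t‖². For each t, set ζ_t = (u_t^⊤ ∇f(x_t))² / (‖u_t‖² ‖∇f(x_t)‖²) if ∇f(x_t) ≠ 0, and ζ_t = (u_t^⊤ a_t)²/‖u_t‖² for an arbitrary unit vector a_t if ∇f(x_t) = 0. Then f(x_T) − f(x*) ≤ exp( −(μ/(8L)) Σ_{t=0}^{T−1} ζ_t ) · (f(x_0) − f(x*)) + Σ_{k=0}^{T−1} exp( −(μ/(8L)) Σ_{t=k+1}^{T−1} ζ_t ) · Δ_{α,k}. -/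
open MeasureTheory Real Finset
open scoped RealInnerProductSpace BigOperators

set_option maxHeartbeats 1000000

section Aux

variable {E : Type*} [NormedAddCommGroup E] [InnerProductSpace ℝ E] [CompleteSpace E]

lemma inner_gradient_eq_fderiv (f : E → ℝ) (y v : E) :
    ⟪gradient f y, v⟫ = fderiv ℝ f y v :=
  InnerProductSpace.toDual_symm_apply

lemma hasDerivAt_comp_line (f : E → ℝ) (hdiff : Differentiable ℝ f) (x v : E) (s : ℝ) :
    HasDerivAt (fun s : ℝ => f (x + s • v)) ⟪gradient f (x + s • v), v⟫ s := by
  have h1 : HasDerivAt (fun s : ℝ => x + s • v) v s := by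
    simpa using ((hasDerivAt_id s).smul_const v).const_add x
  have h2 := (hdiff (x + s • v)).hasFDerivAt.comp_hasDerivAt s h1
  rw [inner_gradient_eq_fderiv]; exact h2

/-- Descent lemma: an `L`-Lipschitz gradient yields a quadratic upper bound. -/
lemma descent_lemma (f : E → ℝ) (L : ℝ) (hL : 0 < L) (hdiff : Differentiable ℝ f)
    (hlip : ∀ x y, ‖gradient f y - gradient f x‖ ≤ L * ‖y - x‖) (x v : E) :
    f (x + v) ≤ f x + ⟪gradient f x, v⟫ + L / 2 * ‖v‖ ^ 2 := by
  set φ : ℝ → ℝ := fun s =>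
    f (x + s • v) - s * ⟪gradient f x, v⟫ - L / 2 * s ^ 2 * ‖v‖ ^ 2 with hφ
  have hder : ∀ s : ℝ, HasDerivAt φ
      (⟪gradient f (x + s • v) - gradient f x, v⟫ - L * s * ‖v‖ ^ 2) s := by
    intro s
    have h1 := hasDerivAt_comp_line f hdiff x v s
    have h2 : HasDerivAt (fun s : ℝ => s * ⟪gradient f x, v⟫) ⟪gradient f x, v⟫ s := by
      simpa using (hasDerivAt_id s).mul_const (⟪gradient f x, v⟫ : ℝ)
    have h3 : HasDerivAt (fun s : ℝ => L / 2 * s ^ 2 * ‖v‖ ^ 2)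
        (L / 2 * (↑2 * s ^ 1) * ‖v‖ ^ 2) s :=
      ((hasDerivAt_pow 2 s).const_mul (L / 2)).mul_const (‖v‖ ^ 2)
    have h5 := (h1.sub h2).sub h3
    exact h5.congr_deriv (by rw [inner_sub_left]; ring)
  have hφdiff : Differentiable ℝ φ := fun s => (hder s).differentiableAt
  have hanti : AntitoneOn φ (Set.Icc (0 : ℝ) 1) := by
    apply antitoneOn_of_deriv_nonpos (convex_Icc 0 1)
      hφdiff.continuous.continuousOn hφdiff.differentiableOn
    intro s hs
    rw [interior_Icc] at hs
    rw [(hder s).deriv]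
    have hcs := real_inner_le_norm (gradient f (x + s • v) - gradient f x) v
    have hl := hlip x (x + s • v)
    have hn : ‖x + s • v - x‖ = s * ‖v‖ := by
      simp [norm_smul, abs_of_pos hs.1]
    rw [hn] at hl
    nlinarith [mul_le_mul_of_nonneg_right hl (norm_nonneg v), norm_nonneg v,
      sq_nonneg ‖v‖]
  have h01 := hanti (Set.left_mem_Icc.2 zero_le_one) (Set.right_mem_Icc.2 zero_le_one)
    zero_le_one
  have e0 : φ 0 = f x := by simp [hφ]
  have e1 : φ 1 = f (x + v) - ⟪gradient f x, v⟫ - L / 2 * ‖v‖ ^ 2 := by simp [hφ]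
  rw [e0, e1] at h01
  linarith

/-- PL-type inequality from strong convexity. -/
lemma pl_inequality (f : E → ℝ) (μ : ℝ) (hμ : 0 < μ)
    (hsc : ∀ x y, f x + ⟪gradient f x, y - x⟫ + μ / 2 * ‖y - x‖ ^ 2 ≤ f y)
    (xstar : E) (y : E) :
    2 * μ * (f y - f xstar) ≤ ‖gradient f y‖ ^ 2 := by
  have h := hsc y xstar
  have h0 : (0 : ℝ) ≤ ‖gradient f y + μ • (xstar - y)‖ ^ 2 := sq_nonneg _
  rw [norm_add_sq_real, real_inner_smul_right, norm_smul, Real.norm_eq_abs,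
    abs_of_pos hμ, mul_pow] at h0
  nlinarith [h, h0, hμ]

end Aux

/-- **Pathwise contraction for strongly convex objectives (Lemma `dec2` / stmt 7).**
For a deterministic trajectory of the normalized two-point zeroth-order method on an
`L`-smooth, `μ`-strongly convex `f` with minimizer `x*`, the optimality gap at time `T`
is controlled by accumulated Beta-type projections `ζ_t` and smoothing errors `Δ_{α,t}`. -/
theorem pathwise_strongly_convex_recursion
    {d : ℕ} (hd : 1 ≤ d)
    (f : EuclideanSpace ℝ (Fin d) → ℝ) (L μ : ℝ) (hL : 0 < L) (hμ : 0 < μ)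
    (hdiff : Differentiable ℝ f)
    (hlip : ∀ x y, ‖gradient f y - gradient f x‖ ≤ L * ‖y - x‖)
    (hsc : ∀ x y, f x + ⟪gradient f x, y - x⟫ + μ / 2 * ‖y - x‖ ^ 2 ≤ f y)
    (xstar : EuclideanSpace ℝ (Fin d)) (hmin : ∀ y, f xstar ≤ f y)
    (T : ℕ) (α : ℝ) (hα : 0 < α)
    (u : ℕ → EuclideanSpace ℝ (Fin d)) (hu : ∀ t, u t ≠ 0)
    (x : ℕ → EuclideanSpace ℝ (Fin d)) (x₀ : EuclideanSpace ℝ (Fin d))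
    (hx0 : x 0 = x₀)
    (η : ℕ → ℝ) (hη : ∀ t, η t = 1 / (4 * L * ‖u t‖ ^ 2))
    (hstep : ∀ t, x (t + 1) = x t -
      η t • (((f (x t + α • u t) - f (x t - α • u t)) / (2 * α)) • u t))
    (β : ℕ → ℝ)
    (hβ : ∀ t, β t = (f (x t + α • u t) - f (x t - α • u t)) / (2 * α)
      - ⟪u t, gradient f (x t)⟫)
    (Δα : ℕ → ℝ)
    (hΔ : ∀ t, Δα t = η t * β t ^ 2 / 2 + L * η t ^ 2 * β t ^ 2 * ‖u t‖ ^ 2)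
    (a : ℕ → EuclideanSpace ℝ (Fin d)) (ha : ∀ t, ‖a t‖ = 1)
    (ζ : ℕ → ℝ)
    (hζ₁ : ∀ t, gradient f (x t) ≠ 0 →
      ζ t = ⟪u t, gradient f (x t)⟫ ^ 2 / (‖u t‖ ^ 2 * ‖gradient f (x t)‖ ^ 2))
    (hζ₂ : ∀ t, gradient f (x t) = 0 → ζ t = ⟪u t, a t⟫ ^ 2 / ‖u t‖ ^ 2) :
    f (x T) - f xstar ≤
      Real.exp (-(μ / (8 * L)) * ∑ t ∈ Finset.range T, ζ t) * (f x₀ - f xstar)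
      + ∑ k ∈ Finset.range T,
          Real.exp (-(μ / (8 * L)) * ∑ t ∈ Finset.Ico (k + 1) T, ζ t) * Δα k := by
  -- basic positivity facts
  have hune : ∀ t, ‖u t‖ ≠ 0 := fun t => norm_ne_zero_iff.2 (hu t)
  have hu2 : ∀ t, (0 : ℝ) < ‖u t‖ ^ 2 := fun t =>
    pow_pos (norm_pos_iff.2 (hu t)) 2
  have hηpos : ∀ t, 0 < η t := by
    intro t; rw [hη t]
    exact div_pos one_pos (mul_pos (by linarith) (hu2 t))
  -- the one-step contraction
  have step : ∀ t, f (x (t + 1)) - f xstar ≤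
      Real.exp (-(μ / (8 * L)) * ζ t) * (f (x t) - f xstar) + Δα t := by
    intro t
    set g : EuclideanSpace ℝ (Fin d) := gradient f (x t) with hgdef
    set p : ℝ := ⟪u t, g⟫ with hpdef
    have hc : (f (x t + α • u t) - f (x t - α • u t)) / (2 * α) = β t + p := by
      rw [hβ t]; ring
    have hxs : x (t + 1) = x t + (-(η t * (β t + p))) • u t := by
      rw [hstep t, hc, smul_smul, sub_eq_add_neg, ← neg_smul]
    have hd := descent_lemma f L hL hdiff hlip (x t) ((-(η t * (β t + p))) • u t)
    rw [← hxs, real_inner_smul_right] at hd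
    have hnorm : ‖(-(η t * (β t + p))) • u t‖ ^ 2 = (η t * (β t + p)) ^ 2 * ‖u t‖ ^ 2 := by
      rw [norm_smul, Real.norm_eq_abs, mul_pow, sq_abs, neg_pow]
      ring
    rw [hnorm] at hd
    have hgu : ⟪g, u t⟫ = p := by rw [hpdef, real_inner_comm]
    rw [hgu] at hd
    -- hd : f (x (t+1)) ≤ f (x t) + -(η t * (β t + p)) * p + L/2 * ((η t * (β t+p))^2 * ‖u t‖^2)
    have e2 : L / 2 * ((η t * (β t + p)) ^ 2 * ‖u t‖ ^ 2) = η t / 8 * (β t + p) ^ 2 := by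
      rw [hη t]; field_simp [hL.ne', hune t]; ring
    rw [e2] at hd
    have e3 : f (x (t + 1)) ≤ f (x t) - η t / 2 * p ^ 2 + η t / 2 * β t ^ 2 := by
      nlinarith [hd, mul_nonneg (hηpos t).le (sq_nonneg (p + β t))]
    have hΔge : η t / 2 * β t ^ 2 ≤ Δα t := by
      have h5 : 0 ≤ L * η t ^ 2 * β t ^ 2 * ‖u t‖ ^ 2 := by positivity
      rw [hΔ t]; linarith
    have hPL : 2 * μ * (f (x t) - f xstar) ≤ ‖g‖ ^ 2 :=
      pl_inequality f μ hμ hsc xstar (x t)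
    have hGnn : 0 ≤ f (x t) - f xstar := sub_nonneg.2 (hmin (x t))
    by_cases h0 : g = 0
    · -- gradient vanishes: the gap is already zero
      have hg0 : ‖g‖ ^ 2 = 0 := by rw [h0, norm_zero]; ring
      have h00 : f (x t) - f xstar = 0 := by nlinarith
      have h01 : Real.exp (-(μ / (8 * L)) * ζ t) * (f (x t) - f xstar) = 0 := by
        rw [h00, mul_zero]
      have hp2 : 0 ≤ η t / 2 * p ^ 2 :=
        mul_nonneg (by linarith [hηpos t]) (sq_nonneg p)
      linarith
    · have hgne : ‖g‖ ≠ 0 := norm_ne_zero_iff.2 h0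
      have hζ := hζ₁ t h0
      rw [← hgdef, ← hpdef] at hζ
      have hDne : (‖u t‖ ^ 2 * ‖g‖ ^ 2) ≠ 0 :=
        mul_ne_zero (pow_ne_zero 2 (hune t)) (pow_ne_zero 2 hgne)
      have hζp : p ^ 2 = ζ t * (‖u t‖ ^ 2 * ‖g‖ ^ 2) := by
        rw [hζ, div_mul_cancel₀ _ hDne]
      have hζnn : 0 ≤ ζ t := by
        rw [hζ]; positivity
      have hexp : 1 - μ / (8 * L) * ζ t ≤ Real.exp (-(μ / (8 * L)) * ζ t) := by
        have := Real.add_one_le_exp (-(μ / (8 * L)) * ζ t)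
        linarith
      have key : μ / (8 * L) * ζ t * (f (x t) - f xstar) ≤ η t / 2 * p ^ 2 := by
        have h1 : η t / 2 * p ^ 2 = ζ t * ‖g‖ ^ 2 * (η t * ‖u t‖ ^ 2) / 2 := by
          rw [hζp]; ring
        have h2 : η t * ‖u t‖ ^ 2 = 1 / (4 * L) := by
          rw [hη t]; field_simp [hL.ne', hune t]
        rw [h1, h2]
        have h3 : μ / (8 * L) * ζ t * (f (x t) - f xstar)
            = μ * ζ t * (f (x t) - f xstar) / (8 * L) := by ring
        have h4 : ζ t * ‖g‖ ^ 2 * (1 / (4 * L)) / 2 = ζ t * ‖g‖ ^ 2 / (8 * L) := by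
          ring
        rw [h3, h4, div_le_div_iff₀ (by linarith : (0:ℝ) < 8 * L)
          (by linarith : (0:ℝ) < 8 * L)]
        have h5 : (8 * L) * (ζ t * (2 * μ * (f (x t) - f xstar)))
            ≤ (8 * L) * (ζ t * ‖g‖ ^ 2) :=
          mul_le_mul_of_nonneg_left (mul_le_mul_of_nonneg_left hPL hζnn)
            (by linarith : (0:ℝ) ≤ 8 * L)
        have h6 : 0 ≤ (8 * L) * (μ * ζ t * (f (x t) - f xstar)) := by
          apply mul_nonneg (by linarith)
          exact mul_nonneg (mul_nonneg hμ.le hζnn) hGnn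
        nlinarith [h5, h6]
      have hexpG : (1 - μ / (8 * L) * ζ t) * (f (x t) - f xstar)
          ≤ Real.exp (-(μ / (8 * L)) * ζ t) * (f (x t) - f xstar) :=
        mul_le_mul_of_nonneg_right hexp hGnn
      nlinarith [e3, hΔge, key, hexpG]
  -- unroll the recursion
  clear hstep hβ hΔ hζ₁ hζ₂ hη
  induction T with
  | zero => simp [hx0]
  | succ T ih =>
    have hE : 0 ≤ Real.exp (-(μ / (8 * L)) * ζ T) := (Real.exp_pos _).le
    calc f (x (T + 1)) - f xstar
        ≤ Real.exp (-(μ / (8 * L)) * ζ T) * (f (x T) - f xstar) + Δα T := step T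
      _ ≤ Real.exp (-(μ / (8 * L)) * ζ T) *
            (Real.exp (-(μ / (8 * L)) * ∑ t ∈ Finset.range T, ζ t) * (f x₀ - f xstar)
              + ∑ k ∈ Finset.range T,
                  Real.exp (-(μ / (8 * L)) * ∑ t ∈ Finset.Ico (k + 1) T, ζ t) * Δα k)
            + Δα T := add_le_add_left (mul_le_mul_of_nonneg_left ih hE) _
      _ = Real.exp (-(μ / (8 * L)) * ∑ t ∈ Finset.range (T + 1), ζ t) * (f x₀ - f xstar)
            + ∑ k ∈ Finset.range (T + 1),
                Real.exp (-(μ / (8 * L)) * ∑ t ∈ Finset.Ico (k + 1) (T + 1), ζ t) * Δα k := by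
          rw [Finset.sum_range_succ
              (fun k => Real.exp (-(μ / (8 * L)) * ∑ t ∈ Finset.Ico (k + 1) (T + 1), ζ t) * Δα k),
            Finset.sum_range_succ ζ, Finset.Ico_self, Finset.sum_empty, mul_zero,
            Real.exp_zero, one_mul]
          have hsplit : ∀ k ∈ Finset.range T,
              Real.exp (-(μ / (8 * L)) * ∑ t ∈ Finset.Ico (k + 1) (T + 1), ζ t) * Δα k
              = Real.exp (-(μ / (8 * L)) * ζ T) *
                  (Real.exp (-(μ / (8 * L)) * ∑ t ∈ Finset.Ico (k + 1) T, ζ t) * Δα k) := by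
            intro k hk
            rw [Finset.sum_Ico_succ_top (Nat.succ_le_of_lt (Finset.mem_range.mp hk)),
              show -(μ / (8 * L)) * (∑ t ∈ Finset.Ico (k + 1) T, ζ t + ζ T)
                = -(μ / (8 * L)) * ζ T + -(μ / (8 * L)) * ∑ t ∈ Finset.Ico (k + 1) T, ζ t
                from by ring,
              Real.exp_add, mul_assoc]
          rw [Finset.sum_congr rfl hsplit, ← Finset.mul_sum,
            show -(μ / (8 * L)) * (∑ t ∈ Finset.range T, ζ t + ζ T)
              = -(μ / (8 * L)) * ζ T + -(μ / (8 * L)) * ∑ t ∈ Finset.range T, ζ t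
              from by ring,
            Real.exp_add]
          ring
end

section
/- Let f: ℝ^d → ℝ be differentiable with L-Lipschitz gradient, let u ∈ ℝ^d be nonzero, α > 0, η = 1/(4L‖u‖²), and β = (f(x + αu) − f(x − αu))/(2α) − u^⊤∇f(x). Then Δ_α := (η β²)/2 + L η² β² ‖u‖² satisfies Δ_α ≤ L α² ‖u‖² / 16. -/
set_option maxHeartbeats 1000000


open MeasureTheory Real Finset
open scoped ENNReal NNReal RealInnerProductSpace BigOperators

lemma taylor_quad_bound {d : ℕ}
    (f : EuclideanSpace ℝ (Fin d) → ℝ) (L : ℝ) (hL : 0 < L)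
    (hdiff : Differentiable ℝ f)
    (hlip : ∀ x y, ‖gradient f y - gradient f x‖ ≤ L * ‖y - x‖)
    (x y : EuclideanSpace ℝ (Fin d)) :
    |f y - f x - ⟪gradient f x, y - x⟫| ≤ L / 2 * ‖y - x‖ ^ 2 := by
  set v := y - x with hv
  have hgradcont : Continuous (gradient f) := by
    have : LipschitzWith L.toNNReal (gradient f) := by
      apply LipschitzWith.of_dist_le_mul
      intro a b
      simpa [dist_eq_norm, Real.coe_toNNReal _ hL.le] using hlip b a
    exact this.continuous
  have hder : ∀ t : ℝ, HasDerivAt (fun t : ℝ => f (x + t • v))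
      ⟪gradient f (x + t • v), v⟫ t := by
    intro t
    have hc : HasDerivAt (fun t : ℝ => x + t • v) v t := by
      simpa using ((hasDerivAt_id t).smul_const v).const_add x
    have hf := (hdiff (x + t • v)).hasFDerivAt
    have := hf.comp_hasDerivAt t hc
    have h2 : HasDerivAt (fun t : ℝ => f (x + t • v)) ((fderiv ℝ f (x + t • v)) v) t := this
    simpa using h2
  have hcont : Continuous fun t : ℝ => ⟪gradient f (x + t • v), v⟫ := by
    apply Continuous.inner
    · exact hgradcont.comp (continuous_const.add (continuous_id.smul continuous_const))
    · exact continuous_const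
  have hint : f (x + (1:ℝ) • v) - f (x + (0:ℝ) • v)
      = ∫ t in (0:ℝ)..1, ⟪gradient f (x + t • v), v⟫ := by
    exact (intervalIntegral.integral_eq_sub_of_hasDerivAt
      (fun t _ => hder t) (hcont.intervalIntegrable 0 1)).symm
  have hxy : f y - f x = ∫ t in (0:ℝ)..1, ⟪gradient f (x + t • v), v⟫ := by
    simpa [hv] using hint
  have hconst : ⟪gradient f x, v⟫ = ∫ _t in (0:ℝ)..1, ⟪gradient f x, v⟫ := by
    simp
  have hsplit : f y - f x - ⟪gradient f x, v⟫
      = ∫ t in (0:ℝ)..1, (⟪gradient f (x + t • v), v⟫ - ⟪gradient f x, v⟫) := by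
    rw [intervalIntegral.integral_sub (hcont.intervalIntegrable 0 1)
      (intervalIntegrable_const), hxy, intervalIntegral.integral_const]
    simp
  rw [hsplit]
  have hbound : ∀ t ∈ Set.Icc (0:ℝ) 1,
      |⟪gradient f (x + t • v), v⟫ - ⟪gradient f x, v⟫| ≤ L * t * ‖v‖ ^ 2 := by
    intro t ht
    rw [← inner_sub_left]
    calc |⟪gradient f (x + t • v) - gradient f x, v⟫|
        ≤ ‖gradient f (x + t • v) - gradient f x‖ * ‖v‖ := abs_real_inner_le_norm _ _
      _ ≤ (L * ‖x + t • v - x‖) * ‖v‖ := by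
          gcongr; exact hlip x (x + t • v)
      _ = L * t * ‖v‖ ^ 2 := by
          have : ‖x + t • v - x‖ = t * ‖v‖ := by
            simp [norm_smul, abs_of_nonneg ht.1]
          rw [this]; ring
  have habs : |∫ t in (0:ℝ)..1, (⟪gradient f (x + t • v), v⟫ - ⟪gradient f x, v⟫)|
      ≤ ∫ t in (0:ℝ)..1, L * t * ‖v‖ ^ 2 := by
    apply intervalIntegral.abs_integral_le_integral_abs (by norm_num) |>.trans
    apply intervalIntegral.integral_mono_on (by norm_num)
    · exact ((hcont.sub continuous_const).abs).intervalIntegrable 0 1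
    · exact ((continuous_const.mul continuous_id).mul continuous_const).intervalIntegrable 0 1
    · exact hbound
  have hcalc : (∫ t in (0:ℝ)..1, L * t * ‖v‖ ^ 2) = L / 2 * ‖v‖ ^ 2 := by
    have : (fun t : ℝ => L * t * ‖v‖ ^ 2) = fun t : ℝ => (L * ‖v‖ ^ 2) * t := by
      funext t; ring
    rw [this, intervalIntegral.integral_const_mul, integral_id]
    ring
  calc |∫ t in (0:ℝ)..1, (⟪gradient f (x + t • v), v⟫ - ⟪gradient f x, v⟫)|
      ≤ ∫ t in (0:ℝ)..1, L * t * ‖v‖ ^ 2 := habs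
    _ = L / 2 * ‖v‖ ^ 2 := hcalc

/-- **Bound on the finite-difference remainder (Lemma `delta_alpha` / stmt 8).**
With the normalized stepsize `η = 1/(4L‖u‖²)`, the smoothing error
`Δ_α = ηβ²/2 + Lη²β²‖u‖²` satisfies `Δ_α ≤ Lα²‖u‖²/16`. -/
theorem delta_alpha_bound
    {d : ℕ} (hd : 1 ≤ d)
    (f : EuclideanSpace ℝ (Fin d) → ℝ) (L : ℝ) (hL : 0 < L)
    (hdiff : Differentiable ℝ f)
    (hlip : ∀ x y, ‖gradient f y - gradient f x‖ ≤ L * ‖y - x‖)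
    (x u : EuclideanSpace ℝ (Fin d)) (hu : u ≠ 0)
    (α η β Δα : ℝ) (hα : 0 < α)
    (hη : η = 1 / (4 * L * ‖u‖ ^ 2))
    (hβ : β = (f (x + α • u) - f (x - α • u)) / (2 * α) - ⟪u, gradient f x⟫)
    (hΔ : Δα = η * β ^ 2 / 2 + L * η ^ 2 * β ^ 2 * ‖u‖ ^ 2) :
    Δα ≤ L * α ^ 2 * ‖u‖ ^ 2 / 16 := by
  have hs : (0:ℝ) < ‖u‖ ^ 2 := pow_pos (norm_pos_iff.mpr hu) 2
  have hA := taylor_quad_bound f L hL hdiff hlip x (x + α • u)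
  have hB := taylor_quad_bound f L hL hdiff hlip x (x - α • u)
  have hv1 : x + α • u - x = α • u := by abel
  have hv2 : x - α • u - x = -(α • u) := by abel
  rw [hv1] at hA
  rw [hv2] at hB
  have hn1 : ‖α • u‖ = α * ‖u‖ := by simp [norm_smul, abs_of_pos hα]
  have hn2 : ‖-(α • u)‖ = α * ‖u‖ := by simp [norm_smul, abs_of_pos hα]
  rw [hn1] at hA
  rw [hn2] at hB
  have hi1 : ⟪gradient f x, α • u⟫ = α * ⟪u, gradient f x⟫ := by
    rw [real_inner_smul_right, real_inner_comm]
  have hi2 : ⟪gradient f x, -(α • u)⟫ = -(α * ⟪u, gradient f x⟫) := by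
    rw [inner_neg_right, hi1]
  rw [hi1] at hA
  rw [hi2] at hB
  set A := f (x + α • u) - f x - α * ⟪u, gradient f x⟫ with hAdef
  set B := f (x - α • u) - f x - -(α * ⟪u, gradient f x⟫) with hBdef
  have hβ' : β = (A - B) / (2 * α) := by
    rw [hβ, hAdef, hBdef]
    field_simp
    ring
  have hβabs : |β| ≤ L * α * ‖u‖ ^ 2 / 2 := by
    rw [hβ']
    rw [abs_div, abs_of_pos (by linarith : (0:ℝ) < 2 * α)]
    rw [div_le_iff₀ (by linarith : (0:ℝ) < 2 * α)]
    calc |A - B| ≤ |A| + |B| := abs_sub _ _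
      _ ≤ L / 2 * (α * ‖u‖) ^ 2 + L / 2 * (α * ‖u‖) ^ 2 := add_le_add hA hB
      _ = L * α * ‖u‖ ^ 2 / 2 * (2 * α) := by ring
  have hβsq : β ^ 2 ≤ (L * α * ‖u‖ ^ 2 / 2) ^ 2 := by
    have := sq_abs β
    nlinarith [abs_nonneg β]
  rw [hΔ, hη]
  have hLs : (0:ℝ) < 4 * L * ‖u‖ ^ 2 := by positivity
  rw [div_pow, one_pow]
  have key : (1 / (4 * L * ‖u‖ ^ 2)) * β ^ 2 / 2 + L * (1 / (4 * L * ‖u‖ ^ 2) ^ 2) * β ^ 2 * ‖u‖ ^ 2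
      = 3 * β ^ 2 / (16 * L * ‖u‖ ^ 2) := by
    field_simp
    ring
  rw [key]
  rw [div_le_div_iff₀ (by positivity) (by norm_num : (0:ℝ) < 16)]
  nlinarith [hβsq, sq_nonneg (L * α * ‖u‖ ^ 2), hs, hL, sq_nonneg β]
end

section
/- Let u_0, …, u_{T−1} be i.i.d. standard Gaussian vectors on ℝ^d. Fix 0 < δ_2 < 1, μ > 0, L > 0 with μ ≤ L, and for each integer 0 ≤ k ≤ T−1 define the deterministic weight ρ_k = min{ 1, exp( −(μ/(8L)) ( (T−k−501)/(2d) − (250/d)( log(1/δ_2) + log log(2(T−k)) ) ) ) }. Then for every 0 < δ_α < 1, with probability at least 1 − δ_α, Σ_{k=0}^{T−1} ρ_k ‖u_k‖² ≤ d ( 1004 + 1000 ( log(1/δ_2) + log log(2T) ) + 32 d L/μ + 3 log(1/δ_α) ). -/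
open MeasureTheory ProbabilityTheory Real Finset
open scoped ENNReal NNReal RealInnerProductSpace BigOperators

/-- `-log q ≤ (q⁻¹ - q)/2` for `0 < q ≤ 1`. -/
lemma neg_log_le_half_sub {q : ℝ} (hq : 0 < q) (hq1 : q ≤ 1) :
    -Real.log q ≤ (q⁻¹ - q) / 2 := by
  set s : ℝ := Real.log q⁻¹ with hs
  have hs0 : 0 ≤ s := Real.log_nonneg (one_le_inv_iff₀.mpr ⟨hq, hq1⟩)
  have hqi : q⁻¹ = Real.exp s := (Real.exp_log (by positivity)).symm
  have hq' : q = Real.exp (-s) := by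
    rw [Real.exp_neg, ← hqi, inv_inv]
  have hsinh : (q⁻¹ - q) / 2 = Real.sinh s := by
    rw [Real.sinh_eq, hqi, hq']
  rw [hsinh, ← Real.log_inv, ← hs]
  rcases eq_or_lt_of_le hs0 with h | h
  · simp [← h]
  · exact (Real.self_lt_sinh_iff.mpr h).le

/-- key scalar bound: `(√(1-2a))⁻¹ ≤ exp (a + a²/(1-2a))` for `0 ≤ a < 1/2`. -/
lemma inv_sqrt_le_exp {a : ℝ} (ha : 0 ≤ a) (ha2 : a < 1/2) :
    (Real.sqrt (1 - 2*a))⁻¹ ≤ Real.exp (a + a^2 / (1 - 2*a)) := by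
  set q : ℝ := 1 - 2*a with hqdef
  have hq : 0 < q := by simp [hqdef]; linarith
  have hq1 : q ≤ 1 := by simp [hqdef]; linarith
  have h1 : (Real.sqrt q)⁻¹ = Real.exp (-(Real.log q / 2)) := by
    rw [show Real.sqrt q = Real.exp (Real.log q / 2) from ?_, Real.exp_neg]
    rw [Real.sqrt_eq_rpow, Real.rpow_def_of_pos hq]
    ring_nf
  have h2 : -(Real.log q / 2) ≤ a + a^2 / q := by
    have := neg_log_le_half_sub hq hq1
    have hineq : (q⁻¹ - q) / 2 / 2 = a + a^2 / q := by
      rw [hqdef]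
      have h2a : 1 - 2*a ≠ 0 := by linarith
      field_simp
      ring
    calc -(Real.log q / 2) = (-Real.log q) / 2 := by ring
    _ ≤ (q⁻¹ - q) / 2 / 2 := by linarith
    _ = a + a^2 / q := hineq
  rw [h1]
  exact Real.exp_le_exp.mpr h2

lemma gauss_pointwise {a : ℝ} (x : ℝ) :
    (gaussianPDFReal 0 1 x) * Real.exp (a * x^2)
      = (Real.sqrt (2*π))⁻¹ * Real.exp (-(1/2 - a) * x^2) := by
  rw [gaussianPDFReal]
  push_cast
  rw [mul_assoc, ← Real.exp_add]
  ring_nf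

lemma integrable_exp_sq_gaussianReal {a : ℝ} (ha : a < 1/2) :
    Integrable (fun z => Real.exp (a * z^2)) (gaussianReal 0 1) := by
  rw [gaussianReal_of_var_ne_zero 0 one_ne_zero]
  have hmeas : Measurable fun x => (gaussianPDFReal 0 1 x).toNNReal :=
    (measurable_gaussianPDFReal 0 1).real_toNNReal
  have : (gaussianPDF 0 1) = fun x => ((gaussianPDFReal 0 1 x).toNNReal : ℝ≥0∞) := by
    funext x; rfl
  rw [this, integrable_withDensity_iff_integrable_smul hmeas]
  have heq : (fun x => ((gaussianPDFReal 0 1 x).toNNReal : ℝ≥0) • Real.exp (a * x^2))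
      = fun x => (Real.sqrt (2*π))⁻¹ * Real.exp (-(1/2 - a) * x^2) := by
    funext x
    rw [NNReal.smul_def, smul_eq_mul, Real.coe_toNNReal _ (gaussianPDFReal_nonneg 0 1 x),
      gauss_pointwise]
  rw [heq]
  exact (integrable_exp_neg_mul_sq (by linarith)).const_mul _

lemma integral_exp_sq_gaussianReal {a : ℝ} (ha : a < 1/2) :
    ∫ z, Real.exp (a * z^2) ∂(gaussianReal 0 1) = (Real.sqrt (1 - 2*a))⁻¹ := by
  rw [gaussianReal_of_var_ne_zero 0 one_ne_zero]
  have hmeas : Measurable fun x => (gaussianPDFReal 0 1 x).toNNReal :=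
    (measurable_gaussianPDFReal 0 1).real_toNNReal
  have h0 : (gaussianPDF 0 1) = fun x => ((gaussianPDFReal 0 1 x).toNNReal : ℝ≥0∞) := by
    funext x; rfl
  rw [h0, integral_withDensity_eq_integral_smul hmeas]
  have heq : (fun x => ((gaussianPDFReal 0 1 x).toNNReal : ℝ≥0) • Real.exp (a * x^2))
      = fun x => (Real.sqrt (2*π))⁻¹ * Real.exp (-(1/2 - a) * x^2) := by
    funext x
    rw [NNReal.smul_def, smul_eq_mul, Real.coe_toNNReal _ (gaussianPDFReal_nonneg 0 1 x),
      gauss_pointwise]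
  rw [heq, integral_const_mul, integral_gaussian]
  have hb : (0:ℝ) < 1/2 - a := by linarith
  have hπ : (0:ℝ) < π := pi_pos
  have h1 : (0:ℝ) ≤ (2*π)⁻¹ := by positivity
  rw [← Real.sqrt_inv (2*π), ← Real.sqrt_mul h1, ← Real.sqrt_inv (1-2*a)]
  congr 1
  have h2 : (1/2 - a) ≠ 0 := by linarith
  have h3 : (1 - 2*a) ≠ 0 := by linarith
  rw [div_eq_mul_inv]
  field_simp

lemma integrable_exp_mul_const_mul_sq {Ω : Type*} [MeasurableSpace Ω] {P : Measure Ω}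
    {X : Ω → ℝ} (hX : Measurable X) (hlaw : Measure.map X P = gaussianReal 0 1)
    {t r : ℝ} (h : t * r < 1/2) :
    Integrable (fun ω => Real.exp (t * (r * X ω ^ 2))) P := by
  have hg : (fun ω => Real.exp (t * (r * X ω ^ 2)))
      = (fun x : ℝ => Real.exp ((t*r) * x^2)) ∘ X := by
    funext ω; simp only [Function.comp_apply]; ring_nf
  rw [hg]
  have hmeas : AEStronglyMeasurable (fun x : ℝ => Real.exp ((t*r) * x^2))
      (Measure.map X P) := (Real.continuous_exp.comp (by continuity)).aestronglyMeasurable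
  rw [← integrable_map_measure hmeas hX.aemeasurable, hlaw]
  exact integrable_exp_sq_gaussianReal h

lemma mgf_const_mul_sq {Ω : Type*} [MeasurableSpace Ω] {P : Measure Ω}
    {X : Ω → ℝ} (hX : Measurable X) (hlaw : Measure.map X P = gaussianReal 0 1)
    {t r : ℝ} (h : t * r < 1/2) :
    mgf (fun ω => r * X ω ^ 2) P t = (Real.sqrt (1 - 2*(t*r)))⁻¹ := by
  rw [mgf]
  have hg : (fun ω => Real.exp (t * (r * X ω ^ 2)))
      = (fun x : ℝ => Real.exp ((t*r) * x^2)) ∘ X := by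
    funext ω; simp only [Function.comp_apply]; ring_nf
  have hmeas : AEStronglyMeasurable (fun x : ℝ => Real.exp ((t*r) * x^2))
      (Measure.map X P) := (Real.continuous_exp.comp (by continuity)).aestronglyMeasurable
  calc ∫ ω, Real.exp (t * (r * X ω ^ 2)) ∂P
      = ∫ x, Real.exp ((t*r) * x^2) ∂(Measure.map X P) := by
        rw [integral_map hX.aemeasurable hmeas]
        exact congrArg (fun f => ∫ ω, f ω ∂P) hg
    _ = (Real.sqrt (1 - 2*(t*r)))⁻¹ := by rw [hlaw]; exact integral_exp_sq_gaussianReal h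

lemma sum_min_geom (n N : ℕ) {K r : ℝ} (hK : 0 ≤ K) (hr0 : 0 ≤ r) (hr1 : r < 1) :
    ∑ i ∈ Finset.range n, min 1 (K * r^i) ≤ (N:ℝ) + K * r^N / (1 - r) := by
  have hterm : ∀ i : ℕ, min 1 (K * r^i) ≤ 1 := fun i => min_le_left _ _
  have hgeom : (0:ℝ) ≤ K * r^N / (1-r) := by
    have : (0:ℝ) < 1 - r := by linarith
    positivity
  by_cases h : n ≤ N
  · calc ∑ i ∈ Finset.range n, min 1 (K * r^i) ≤ ∑ i ∈ Finset.range n, (1:ℝ) :=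
        Finset.sum_le_sum fun i _ => hterm i
    _ = n := by simp
    _ ≤ (N:ℝ) + K * r^N / (1-r) := by
        have : (n:ℝ) ≤ N := Nat.cast_le.mpr h
        linarith
  · push_neg at h
    rw [← Finset.sum_range_add_sum_Ico _ h.le]
    have h1 : ∑ i ∈ Finset.range N, min 1 (K * r^i) ≤ (N:ℝ) := by
      calc ∑ i ∈ Finset.range N, min 1 (K * r^i) ≤ ∑ i ∈ Finset.range N, (1:ℝ) :=
          Finset.sum_le_sum fun i _ => hterm i
      _ = N := by simp
    have h2 : ∑ i ∈ Finset.Ico N n, min 1 (K * r^i) ≤ K * r^N / (1-r) := by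
      have hstep : ∑ i ∈ Finset.Ico N n, min 1 (K * r^i)
          ≤ ∑ i ∈ Finset.Ico N n, K * r^i :=
        Finset.sum_le_sum fun i _ => min_le_right _ _
      have hre : ∑ i ∈ Finset.Ico N n, K * r^i
          = K * r^N * ∑ j ∈ Finset.range (n - N), r^j := by
        rw [Finset.sum_Ico_eq_sum_range]
        rw [Finset.mul_sum]
        refine Finset.sum_congr rfl fun j _ => ?_
        rw [pow_add]; ring
      have hgs : ∑ j ∈ Finset.range (n - N), r^j ≤ (1-r)⁻¹ := by
        refine (Summable.sum_le_tsum _ (fun j _ => pow_nonneg hr0 j) ?_ : _ ≤ ∑' j, r^j) |>.trans ?_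
        · exact summable_geometric_of_lt_one hr0 hr1
        · rw [tsum_geometric_of_lt_one hr0 hr1]
      calc ∑ i ∈ Finset.Ico N n, min 1 (K * r^i) ≤ K * r^N * ∑ j ∈ Finset.range (n-N), r^j := by
            rw [← hre]; exact hstep
      _ ≤ K * r^N * (1-r)⁻¹ := by
            refine mul_le_mul_of_nonneg_left hgs (by positivity)
      _ = K * r^N / (1-r) := by rw [div_eq_mul_inv]
    linarith

lemma sum_rho_bound {d T : ℕ} (hd : 1 ≤ d) (hT : 1 ≤ T)
    {L μ δ₂ : ℝ} (hL : 0 < L) (hμ : 0 < μ) (hμL : μ ≤ L)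
    (hδ₂ : 0 < δ₂) (hδ₂1 : δ₂ < 1)
    {ρ : ℕ → ℝ}
    (hρ : ∀ k, k < T →
      ρ k = min 1 (Real.exp (-(μ / (8 * L)) *
        (((T : ℝ) - k - 501) / (2 * d)
          - 250 / d * (Real.log (1 / δ₂) + Real.log (Real.log (2 * ((T : ℝ) - k)))))))) :
    ∑ k ∈ Finset.range T, ρ k
      ≤ 502 + 500 * (Real.log (1 / δ₂) + Real.log (Real.log (2 * T))) + 16 * L * d / μ := by
  set A : ℝ := Real.log (1 / δ₂) + Real.log (Real.log (2 * T)) with hA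
  have hd0 : (0:ℝ) < d := by exact_mod_cast hd
  set c : ℝ := μ / (16 * L * d) with hc
  have hc0 : 0 < c := by positivity
  set s₀ : ℝ := 501 + 500 * A with hs₀def
  -- A ≥ -1
  have hlog2lt : Real.log 2 < 1 := by
    have := Real.log_two_lt_d9; linarith
  have hlog2gt : (1:ℝ)/2 < Real.log 2 := by
    have := Real.log_two_gt_d9; linarith
  have hA1 : -1 ≤ A := by
    have h1 : 0 ≤ Real.log (1 / δ₂) := by
      apply Real.log_nonneg
      rw [le_div_iff₀ hδ₂]; linarith
    have h2T : (2:ℝ) ≤ 2 * T := by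
      have : (1:ℝ) ≤ T := by exact_mod_cast hT
      linarith
    have h2 : Real.log 2 ≤ Real.log (2 * T) := Real.log_le_log (by norm_num) h2T
    have h3 : Real.log (1/2 : ℝ) ≤ Real.log (Real.log (2 * T)) :=
      Real.log_le_log (by norm_num) (by linarith)
    have h4 : Real.log (1/2 : ℝ) = -Real.log 2 := by
      rw [one_div, Real.log_inv]
    rw [hA]; rw [h4] at h3; linarith
  have hs₀ : 0 ≤ s₀ := by rw [hs₀def]; linarith
  set K : ℝ := Real.exp (c * (s₀ - 1)) with hK
  set r : ℝ := Real.exp (-c) with hr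
  have hr0 : 0 < r := Real.exp_pos _
  have hr1 : r < 1 := by rw [hr, Real.exp_lt_one_iff]; linarith
  -- pointwise bound
  have hpt : ∀ k ∈ Finset.range T, ρ k ≤ min 1 (K * r ^ (T - 1 - k)) := by
    intro k hk
    rw [Finset.mem_range] at hk
    rw [hρ k hk]
    refine min_le_min (le_refl 1) ?_
    have hTk1 : (1:ℝ) ≤ (T:ℝ) - k := by
      have : (k:ℝ) + 1 ≤ T := by exact_mod_cast hk
      linarith
    have hcast : ((T - 1 - k : ℕ) : ℝ) = (T:ℝ) - 1 - k := by
      have h1 : k ≤ T - 1 := Nat.le_sub_one_of_lt hk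
      have h2 : 1 ≤ T := hT
      push_cast [Nat.cast_sub h1, Nat.cast_sub h2]
      ring
    have hRHS : K * r ^ (T - 1 - k) = Real.exp (c * s₀ - c * ((T:ℝ) - k)) := by
      rw [hK, hr, ← Real.exp_nat_mul, ← Real.exp_add, hcast]
      congr 1
      ring
    rw [hRHS]
    apply Real.exp_le_exp.mpr
    -- exponent comparison
    have hAk : Real.log (1 / δ₂) + Real.log (Real.log (2 * ((T:ℝ) - k))) ≤ A := by
      rw [hA]
      have h2Tk : (2:ℝ) ≤ 2 * ((T:ℝ) - k) := by linarith
      have hTT : 2 * ((T:ℝ) - k) ≤ 2 * T := by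
        have : (0:ℝ) ≤ k := Nat.cast_nonneg k
        linarith
      have hl : Real.log (2 * ((T:ℝ) - k)) ≤ Real.log (2 * T) :=
        Real.log_le_log (by linarith) hTT
      have hlpos : 0 < Real.log (2 * ((T:ℝ) - k)) := by
        have := Real.log_le_log (by norm_num : (0:ℝ) < 2) h2Tk
        linarith [hlog2gt]
      have : Real.log (Real.log (2 * ((T:ℝ) - k))) ≤ Real.log (Real.log (2 * T)) :=
        Real.log_le_log hlpos hl
      linarith
    have hexp : -(μ / (8 * L)) *
        (((T : ℝ) - k - 501) / (2 * d)
          - 250 / d * (Real.log (1 / δ₂) + Real.log (Real.log (2 * ((T : ℝ) - k)))))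
        = -c * ((T:ℝ) - k - 501)
          + 500 * c * (Real.log (1 / δ₂) + Real.log (Real.log (2 * ((T : ℝ) - k)))) := by
      rw [hc]
      field_simp
      ring
    rw [hexp]
    have h500 : 500 * c * (Real.log (1 / δ₂) + Real.log (Real.log (2 * ((T : ℝ) - k))))
        ≤ 500 * c * A := by
      apply mul_le_mul_of_nonneg_left hAk (by positivity)
    calc -c * ((T:ℝ) - k - 501)
          + 500 * c * (Real.log (1 / δ₂) + Real.log (Real.log (2 * ((T : ℝ) - k))))
        ≤ -c * ((T:ℝ) - k - 501) + 500 * c * A := by linarith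
      _ = c * s₀ - c * ((T:ℝ) - k) := by rw [hs₀def]; ring
  -- sum bound
  have hsum1 : ∑ k ∈ Finset.range T, ρ k
      ≤ ∑ k ∈ Finset.range T, min 1 (K * r ^ (T - 1 - k)) := Finset.sum_le_sum hpt
  have hsum2 : ∑ k ∈ Finset.range T, min 1 (K * r ^ (T - 1 - k))
      = ∑ i ∈ Finset.range T, min 1 (K * r ^ i) :=
    Finset.sum_range_reflect (fun i => min 1 (K * r ^ i)) T
  set N : ℕ := ⌈s₀⌉₊ with hN
  have hsum3 : ∑ i ∈ Finset.range T, min 1 (K * r ^ i) ≤ (N:ℝ) + K * r^N / (1 - r) :=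
    sum_min_geom T N (le_of_lt (Real.exp_pos _)) hr0.le hr1
  have hNle : (N:ℝ) ≤ s₀ + 1 := le_of_lt (Nat.ceil_lt_add_one hs₀)
  have hKrN : K * r^N ≤ r := by
    rw [hK, hr, ← Real.exp_nat_mul, ← Real.exp_add]
    apply Real.exp_le_exp.mpr
    have : s₀ ≤ (N:ℝ) := Nat.le_ceil s₀
    nlinarith
  have hrr : r / (1 - r) ≤ 1 / c := by
    rw [div_le_div_iff₀ (by linarith) hc0]
    have h1 : 1 + c ≤ Real.exp c := by linarith [Real.add_one_le_exp c]
    have h2 : (1 + c) * r ≤ Real.exp c * r := by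
      apply mul_le_mul_of_nonneg_right h1 hr0.le
    have h3 : Real.exp c * r = 1 := by
      rw [hr, ← Real.exp_add]; simp
    nlinarith
  have hfrac : K * r^N / (1 - r) ≤ 1 / c := by
    calc K * r^N / (1 - r) ≤ r / (1 - r) := by
          apply div_le_div_of_nonneg_right hKrN (by linarith) |>.trans (le_refl _) -- maybe wrong name
      _ ≤ 1 / c := hrr
  have hinvc : 1 / c = 16 * L * d / μ := by
    rw [hc]
    field_simp
  calc ∑ k ∈ Finset.range T, ρ k ≤ (N:ℝ) + K * r^N / (1 - r) := by
        rw [← hsum2] at hsum3; linarith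
    _ ≤ (s₀ + 1) + 1/c := by linarith
    _ = 502 + 500 * A + 16 * L * d / μ := by rw [hs₀def, hinvc]; ring

set_option maxHeartbeats 1000000 in
/-- **Upper-tail bound for the weighted accumulated Gaussian norms
(Lemma `alp_term` / stmt 10).**  With the deterministic weights `ρ_k` built from the
suffix lower-tail exponents, the weighted chi-square sum `Σ ρ_k ‖u_k‖²` is bounded with
probability at least `1 − δ_α`. -/
theorem weighted_gaussian_norm_upper_tail
    {d : ℕ} (hd : 1 ≤ d)
    {Ω : Type*} [MeasurableSpace Ω] (P : Measure Ω) [IsProbabilityMeasure P]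
    (T : ℕ)
    (u : ℕ → Ω → EuclideanSpace ℝ (Fin d))
    (hu_meas : ∀ t, Measurable (u t))
    (hu_indep : iIndepFun
      (fun p : Fin T × Fin d => fun ω => u (p.1 : ℕ) ω p.2) P)
    (hu_law : ∀ t, t < T → ∀ i, Measure.map (fun ω => u t ω i) P = gaussianReal 0 1)
    (L μ : ℝ) (hL : 0 < L) (hμ : 0 < μ) (hμL : μ ≤ L)
    (δ₂ : ℝ) (hδ₂ : 0 < δ₂) (hδ₂1 : δ₂ < 1)
    (ρ : ℕ → ℝ)
    (hρ : ∀ k, k < T →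
      ρ k = min 1 (Real.exp (-(μ / (8 * L)) *
        (((T : ℝ) - k - 501) / (2 * d)
          - 250 / d * (Real.log (1 / δ₂) + Real.log (Real.log (2 * ((T : ℝ) - k))))))))
    (δα : ℝ) (hδα : 0 < δα) (hδα1 : δα < 1) :
    ENNReal.ofReal (1 - δα) ≤
      P {ω | ∑ k ∈ Finset.range T, ρ k * ‖u k ω‖ ^ 2 ≤
        (d : ℝ) * (1004 + 1000 * (Real.log (1 / δ₂) + Real.log (Real.log (2 * T)))
          + 32 * d * L / μ + 3 * Real.log (1 / δα))} := by
  have hd0 : (0:ℝ) < d := by exact_mod_cast hd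
  have hd1 : (1:ℝ) ≤ d := by exact_mod_cast hd
  have hδα' : 0 ≤ Real.log (1 / δα) := by
    apply Real.log_nonneg; rw [le_div_iff₀ hδα]; linarith
  have hδ₂' : 0 ≤ Real.log (1 / δ₂) := by
    apply Real.log_nonneg; rw [le_div_iff₀ hδ₂]; linarith
  rcases Nat.eq_zero_or_pos T with hT0 | hT
  · subst hT0
    have hset : {ω : Ω | ∑ k ∈ Finset.range 0, ρ k * ‖u k ω‖ ^ 2 ≤
        (d : ℝ) * (1004 + 1000 * (Real.log (1 / δ₂) + Real.log (Real.log (2 * (0:ℕ))))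
          + 32 * d * L / μ + 3 * Real.log (1 / δα))} = Set.univ := by
      apply Set.eq_univ_of_forall
      intro ω
      simp only [Finset.range_zero, Finset.sum_empty, Set.mem_setOf_eq, Nat.cast_zero,
        mul_zero, Real.log_zero]
      positivity
    rw [hset, measure_univ]
    exact ENNReal.ofReal_le_one.mpr (by linarith)
  -- main case
  have hρ01 : ∀ k, k < T → 0 < ρ k ∧ ρ k ≤ 1 := by
    intro k hk
    rw [hρ k hk]
    exact ⟨lt_min one_pos (Real.exp_pos _), min_le_left _ _⟩
  set A : ℝ := Real.log (1 / δ₂) + Real.log (Real.log (2 * T)) with hA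
  set x : ℝ := Real.log (1 / δα) with hx
  have hx0 : 0 < x := by
    rw [hx]; apply Real.log_pos; rw [lt_div_iff₀ hδα]; linarith
  set Y : Fin T × Fin d → Ω → ℝ := fun p ω => ρ (p.1 : ℕ) * (u (p.1 : ℕ) ω p.2) ^ 2 with hY
  have hXmeas : ∀ p : Fin T × Fin d, Measurable (fun ω => u (p.1 : ℕ) ω p.2) :=
    fun p => (EuclideanSpace.proj p.2 : EuclideanSpace ℝ (Fin d) →L[ℝ] ℝ).continuous.measurable.comp (hu_meas (p.1 : ℕ))
  have hYmeas : ∀ p, Measurable (Y p) := by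
    intro p
    exact ((hXmeas p).pow_const 2).const_mul _
  have hYindep : iIndepFun Y P := by
    exact hu_indep.comp (fun p (y : ℝ) => ρ (p.1 : ℕ) * y ^ 2)
      (fun p => (measurable_id.pow_const 2).const_mul _)
  set v : ℝ := ∑ p : Fin T × Fin d, ρ (p.1 : ℕ) with hv
  have hvsum : v = (d:ℝ) * ∑ k ∈ Finset.range T, ρ k := by
    rw [hv, Fintype.sum_prod_type]
    simp only [Finset.sum_const, Finset.card_univ, Fintype.card_fin, nsmul_eq_mul]
    rw [← Finset.mul_sum, Fin.sum_univ_eq_sum_range]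
  have hsumρpos : 0 < ∑ k ∈ Finset.range T, ρ k :=
    Finset.sum_pos (fun k hk => (hρ01 k (Finset.mem_range.mp hk)).1)
      (by simp [Finset.nonempty_range_iff]; omega)
  have hv0 : 0 < v := by rw [hvsum]; positivity
  set σv : ℝ := Real.sqrt v with hσv
  set σx : ℝ := Real.sqrt x with hσx
  have hσv0 : 0 < σv := Real.sqrt_pos.mpr hv0
  have hσx0 : 0 < σx := Real.sqrt_pos.mpr hx0
  have hσv2 : σv ^ 2 = v := Real.sq_sqrt hv0.le
  have hσx2 : σx ^ 2 = x := Real.sq_sqrt hx0.le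
  set D : ℝ := σv + 2 * σx with hD
  have hD0 : 0 < D := by positivity
  set lam : ℝ := σx / D with hlam
  have hlam0 : 0 < lam := by positivity
  have hlam2 : lam < 1/2 := by
    rw [hlam, div_lt_iff₀ hD0, hD]
    linarith
  set τ : ℝ := σv^2 + 2*σv*σx + 2*σx^2 with hτ
  -- per-index mgf conditions
  have hcond : ∀ p : Fin T × Fin d, lam * ρ (p.1 : ℕ) < 1/2 := by
    intro p
    obtain ⟨h1, h2⟩ := hρ01 (p.1 : ℕ) p.1.isLt
    calc lam * ρ (p.1:ℕ) ≤ lam * 1 := by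
          apply mul_le_mul_of_nonneg_left h2 hlam0.le
      _ = lam := mul_one _
      _ < 1/2 := hlam2
  have hmgf_le : ∀ p : Fin T × Fin d,
      mgf (Y p) P lam ≤ Real.exp (lam * ρ (p.1:ℕ) + lam^2 * ρ (p.1:ℕ) / (1 - 2*lam)) := by
    intro p
    obtain ⟨h1, h2⟩ := hρ01 (p.1 : ℕ) p.1.isLt
    have ha0 : 0 ≤ lam * ρ (p.1:ℕ) := by positivity
    have hmgf := mgf_const_mul_sq (hXmeas p) (hu_law (p.1:ℕ) p.1.isLt p.2) (hcond p)
    refine le_trans (le_of_eq hmgf)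
      ((inv_sqrt_le_exp ha0 (hcond p)).trans (Real.exp_le_exp.mpr ?_))
    have hρ2 : ρ (p.1:ℕ)^2 ≤ ρ (p.1:ℕ) := by nlinarith [h1, h2]
    have hlρ : lam * ρ (p.1:ℕ) ≤ lam := mul_le_of_le_one_right hlam0.le h2
    have key : (lam * ρ (p.1:ℕ))^2 / (1 - 2*(lam * ρ (p.1:ℕ)))
        ≤ lam^2 * ρ (p.1:ℕ) / (1 - 2*lam) := by
      apply div_le_div₀ (by positivity) ?_ (by linarith) (by linarith)
      calc (lam * ρ (p.1:ℕ))^2 = lam^2 * ρ (p.1:ℕ)^2 := by ring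
        _ ≤ lam^2 * ρ (p.1:ℕ) := mul_le_mul_of_nonneg_left hρ2 (by positivity)
    linarith [key]
  -- integrability
  have h_int_each : ∀ p : Fin T × Fin d,
      Integrable (fun ω => Real.exp (lam * Y p ω)) P := by
    intro p
    exact integrable_exp_mul_const_mul_sq (hXmeas p) (hu_law (p.1:ℕ) p.1.isLt p.2) (hcond p)
  have h_int : Integrable (fun ω => Real.exp (lam * (∑ p : Fin T × Fin d, Y p) ω)) P :=
    hYindep.integrable_exp_mul_sum hYmeas (fun p _ => h_int_each p)
  -- Chernoff
  have hcher := measure_ge_le_exp_mul_mgf (X := ∑ p : Fin T × Fin d, Y p) (μ := P) τ hlam0.le h_int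
  have hmgfS : mgf (∑ p : Fin T × Fin d, Y p) P lam = ∏ p : Fin T × Fin d, mgf (Y p) P lam :=
    hYindep.mgf_sum hYmeas Finset.univ
  have hprod_le : ∏ p : Fin T × Fin d, mgf (Y p) P lam
      ≤ Real.exp (lam * v + lam^2 * v / (1 - 2*lam)) := by
    calc ∏ p : Fin T × Fin d, mgf (Y p) P lam
        ≤ ∏ p : Fin T × Fin d,
            Real.exp (lam * ρ (p.1:ℕ) + lam^2 * ρ (p.1:ℕ) / (1 - 2*lam)) :=
          Finset.prod_le_prod (fun p _ => mgf_nonneg) (fun p _ => hmgf_le p)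
      _ = Real.exp (∑ p : Fin T × Fin d,
            (lam * ρ (p.1:ℕ) + lam^2 * ρ (p.1:ℕ) / (1 - 2*lam))) := by
          rw [Real.exp_sum]
      _ = Real.exp (lam * v + lam^2 * v / (1 - 2*lam)) := by
          congr 1
          rw [hv, Finset.mul_sum, Finset.mul_sum, Finset.sum_div, ← Finset.sum_add_distrib]
  have hDne : D ≠ 0 := ne_of_gt hD0
  have h12 : 1 - 2*lam = σv / D := by
    rw [hlam, hD]
    field_simp
    ring
  have halg : lam * v + lam^2 * v / (1 - 2*lam) - lam * τ = -x := by
    rw [← hσv2, ← hσx2, h12, hτ, hlam]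
    have hσvne : σv ≠ 0 := ne_of_gt hσv0
    field_simp
    ring
  have hup : (P {ω | τ ≤ (∑ p : Fin T × Fin d, Y p) ω}).toReal ≤ δα := by
    calc (P {ω | τ ≤ (∑ p : Fin T × Fin d, Y p) ω}).toReal
        ≤ Real.exp (-lam * τ) * mgf (∑ p : Fin T × Fin d, Y p) P lam := hcher
      _ ≤ Real.exp (-lam * τ) * Real.exp (lam * v + lam^2 * v / (1 - 2*lam)) := by
          rw [hmgfS]
          exact mul_le_mul_of_nonneg_left hprod_le (Real.exp_pos _).le
      _ = Real.exp (lam * v + lam^2 * v / (1 - 2*lam) - lam * τ) := by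
          rw [← Real.exp_add]; congr 1; ring
      _ = Real.exp (-x) := by rw [halg]
      _ = δα := by rw [hx, one_div, Real.log_inv, neg_neg, Real.exp_log hδα]
  set B : ℝ := (d:ℝ) * (1004 + 1000 * A + 32 * (d:ℝ) * L / μ + 3 * x) with hB
  have hτB : τ ≤ B := by
    have h2ab : 2*σv*σx ≤ σv^2 + σx^2 := two_mul_le_add_sq σv σx
    have hSig := sum_rho_bound hd hT hL hμ hμL hδ₂ hδ₂1 hρ
    have hvle : v ≤ (d:ℝ) * (502 + 500 * A + 16 * L * d / μ) := by
      rw [hvsum]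
      exact mul_le_mul_of_nonneg_left hSig hd0.le
    have hτ2 : τ ≤ 2*v + 3*x := by
      have h' : τ ≤ 2*σv^2 + 3*σx^2 := by rw [hτ]; linarith
      rw [hσv2, hσx2] at h'
      exact h'
    have hxd : 0 ≤ x * ((d:ℝ) - 1) := mul_nonneg hx0.le (by linarith)
    have key : B = 2*((d:ℝ)*(502 + 500*A + 16*L*(d:ℝ)/μ)) + 3*((d:ℝ)*x) - 3*x + 3*x := by
      rw [hB]; ring
    rw [key]
    have h3x : 3*x ≤ 3*((d:ℝ)*x) := by nlinarith [hxd]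
    linarith [hvle, hτ2, h3x]
  -- identify the sum
  have hSeq : ∀ ω, (∑ p : Fin T × Fin d, Y p) ω
      = ∑ k ∈ Finset.range T, ρ k * ‖u k ω‖^2 := by
    intro ω
    rw [Finset.sum_apply, Fintype.sum_prod_type,
      ← Fin.sum_univ_eq_sum_range (fun k => ρ k * ‖u k ω‖^2) T]
    refine Finset.sum_congr rfl fun a _ => ?_
    simp only [hY]
    rw [← Finset.mul_sum]
    congr 1
    rw [EuclideanSpace.norm_eq, Real.sq_sqrt (by positivity)]
    refine Finset.sum_congr rfl fun b _ => ?_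
    rw [Real.norm_eq_abs, sq_abs]
  set E : Set Ω := {ω | ∑ k ∈ Finset.range T, ρ k * ‖u k ω‖^2 ≤ B} with hE
  have hEmeas : MeasurableSet E := by
    apply measurableSet_le ?_ measurable_const
    exact Finset.measurable_sum _ fun k _ => ((hu_meas k).norm.pow_const 2).const_mul _
  have hsub : Eᶜ ⊆ {ω | τ ≤ (∑ p : Fin T × Fin d, Y p) ω} := by
    intro ω hω
    simp only [hE, Set.mem_compl_iff, Set.mem_setOf_eq, not_le] at hω
    simp only [Set.mem_setOf_eq, hSeq ω]
    linarith
  have hPc : P Eᶜ ≤ ENNReal.ofReal δα := by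
    refine (measure_mono hsub).trans ?_
    rw [← ENNReal.ofReal_toReal (measure_ne_top P _)]
    exact ENNReal.ofReal_le_ofReal hup
  have hsplit : P E + P Eᶜ = 1 := by
    rw [measure_add_measure_compl hEmeas, measure_univ]
  calc ENNReal.ofReal (1 - δα) = ENNReal.ofReal 1 - ENNReal.ofReal δα := by
        rw [ENNReal.ofReal_sub _ hδα.le]
    _ ≤ P E := by
        rw [ENNReal.ofReal_one, tsub_le_iff_right, ← hsplit]
        exact add_le_add_right hPc _
end

section
/- Let f: ℝ^d → ℝ be differentiable with L-Lipschitz gradient, and let x_0 ∈ ℝ^d and α > 0. Let u_0, …, u_{T−1} be i.i.d. standard Gaussian vectors on ℝ^d, and define the iterates x_{t+1} = x_t − η_t g(x_t) with η_t = 1/(4L‖u_t‖²), g(x_t) = ((f(x_t + α u_t) − f(x_t − α u_t))/(2α)) u_t, β_t = (f(x_t + α u_t) − f(x_t − α u_t))/(2α) − u_t^⊤ ∇f(x_t), and Δ_{α,t} = (η_t β_t²)/2 + L η_t² β_t² ‖u_t‖². For 0 < δ < 1 set τ_δ = log(2/δ), U_T(δ) = dT + 2√(dT τ_δ) + 2τ_δ,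 and A_{α,T}(δ) = (Lα²/16) U_T(δ). Then with probability at least 1 − δ/2, Σ_{t=0}^{T−1} Δ_{α,t} ≤ A_{α,T}(δ). -/
open MeasureTheory ProbabilityTheory Real Finset
open scoped ENNReal NNReal RealInnerProductSpace BigOperators

/-! ### Auxiliary lemmas -/

lemma neg_log_one_sub_le {s : ℝ} (h0 : 0 ≤ s) (h1 : s < 1) :
    -Real.log (1 - s) ≤ s + s^2 / (2 * (1 - s)) := by
  set g : ℝ → ℝ := fun t => Real.log (1 - t) + (t + t^2 / (2 * (1 - t))) with hg
  have key : ∀ t ∈ Set.Ico (0:ℝ) 1, HasDerivAt g (t^2 / (2 * (1 - t)^2)) t := by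
    intro t ht
    have ht1 : (1:ℝ) - t ≠ 0 := by
      have := ht.2; intro h; nlinarith
    have h1' : HasDerivAt (fun t : ℝ => Real.log (1 - t)) (-1 / (1 - t)) t := by
      have : HasDerivAt (fun t : ℝ => 1 - t) (-1) t := by
        simpa using (hasDerivAt_id t).const_sub 1
      simpa using this.log ht1
    have h2 : HasDerivAt (fun t : ℝ => t ^ 2 / (2 * (1 - t)))
        ((2 * t * (2 * (1 - t)) - t^2 * (-2)) / (2 * (1 - t))^2) t := by
      have hnum : HasDerivAt (fun t : ℝ => t ^ 2) (2 * t) t := by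
        simpa using (hasDerivAt_pow 2 t)
      have hden : HasDerivAt (fun t : ℝ => 2 * (1 - t)) (-2) t := by
        have : HasDerivAt (fun t : ℝ => 1 - t) (-1) t := by
          simpa using (hasDerivAt_id t).const_sub 1
        simpa using this.const_mul 2
      exact hnum.div hden (by simpa using mul_ne_zero two_ne_zero ht1)
    have := (h1'.add ((hasDerivAt_id t).add h2))
    refine HasDerivAt.congr_deriv this ?_
    field_simp
    ring
  have mono : MonotoneOn g (Set.Ico (0:ℝ) 1) := by
    apply monotoneOn_of_deriv_nonneg (convex_Ico 0 1)
    · intro t ht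
      exact (key t ht).continuousAt.continuousWithinAt
    · intro t ht
      rw [interior_Ico] at ht
      exact (key t ⟨le_of_lt ht.1, ht.2⟩).differentiableAt.differentiableWithinAt
    · intro t ht
      rw [interior_Ico] at ht
      rw [(key t ⟨le_of_lt ht.1, ht.2⟩).deriv]
      positivity
  have h := mono (Set.mem_Ico.mpr ⟨le_refl 0, one_pos⟩) (Set.mem_Ico.mpr ⟨h0, h1⟩) h0
  simp only [hg] at h
  norm_num at h
  linarith

lemma chernoff_numeric (n : ℕ) (hn : 0 < n) {τ : ℝ} (hτ : 0 < τ) :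
    ∃ l : ℝ, 0 < l ∧ l < 1/2 ∧
      Real.exp (-l * ((n:ℝ) + 2 * Real.sqrt ((n:ℝ) * τ) + 2 * τ))
        * ((Real.sqrt (1 - 2 * l))⁻¹) ^ n ≤ Real.exp (-τ) := by
  have hN : (0:ℝ) < n := by exact_mod_cast hn
  set u₀ : ℝ := Real.sqrt (τ / n) with hu₀def
  have hu₀ : 0 < u₀ := Real.sqrt_pos.mpr (by positivity)
  set l : ℝ := u₀ / (1 + 2 * u₀) with hldef
  have hden : (0:ℝ) < 1 + 2 * u₀ := by linarith
  have hl : 0 < l := div_pos hu₀ hden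
  have hl2 : l < 1/2 := by
    rw [hldef, div_lt_iff₀ hden]; linarith
  have hq : 1 - 2 * l = (1 + 2 * u₀)⁻¹ := by
    rw [hldef]; field_simp; ring
  have hqpos : (0:ℝ) < 1 - 2 * l := by linarith
  refine ⟨l, hl, hl2, ?_⟩
  have hid1 : (n:ℝ) * u₀ = Real.sqrt ((n:ℝ) * τ) := by
    rw [hu₀def, ← Real.sqrt_sq hN.le, ← Real.sqrt_mul (by positivity)]
    congr 1; field_simp; ring; rw [Real.sq_sqrt (by positivity)]
  have hid2 : u₀ * Real.sqrt ((n:ℝ) * τ) = τ := by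
    rw [hu₀def, ← Real.sqrt_mul (by positivity)]
    rw [show τ / n * ((n:ℝ) * τ) = τ^2 by field_simp]
    exact Real.sqrt_sq hτ.le
  set U : ℝ := (n:ℝ) + 2 * Real.sqrt ((n:ℝ) * τ) + 2 * τ with hUdef
  have hkey : l * (Real.sqrt ((n:ℝ) * τ) + 2 * τ) = τ := by
    rw [hldef, div_mul_eq_mul_div, div_eq_iff hden.ne']
    nlinarith [hid2]
  have hlog : -Real.log (1 - 2 * l) ≤ 2 * l + 2 * l * u₀ := by
    have h := neg_log_one_sub_le (s := 2 * l) (by linarith) (by linarith)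
    have hs : (2*l)^2 / (2 * (1 - 2*l)) = 2 * l * u₀ := by
      rw [hq, hldef]
      field_simp
    calc -Real.log (1 - 2 * l) ≤ 2*l + (2*l)^2 / (2 * (1 - 2*l)) := h
      _ = 2 * l + 2 * l * u₀ := by rw [hs]
  have hL1 : (0:ℝ) < Real.exp (-l * U) * ((Real.sqrt (1 - 2 * l))⁻¹) ^ n := by positivity
  rw [← Real.log_le_log_iff hL1 (Real.exp_pos _), Real.log_mul (by positivity) (by positivity),
    Real.log_exp, Real.log_exp, Real.log_pow, Real.log_inv, Real.log_sqrt hqpos.le]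
  have hmain : (n:ℝ) * (2 * l + 2 * l * u₀) / 2 ≤ l * U - τ := by
    have h1 : l * U - τ = l * (n:ℝ) + l * Real.sqrt ((n:ℝ) * τ) := by
      rw [hUdef]; nlinarith [hkey]
    rw [h1]
    have h2 : (n:ℝ) * (2 * l + 2 * l * u₀) / 2 = l * (n:ℝ) + l * ((n:ℝ) * u₀) := by ring
    rw [h2, hid1]
  have hlogn : (n:ℝ) * -(Real.log (1 - 2 * l) / 2) ≤ (n:ℝ) * (2 * l + 2 * l * u₀) / 2 := by
    rw [mul_comm]
    rw [show (n:ℝ) * (2 * l + 2 * l * u₀) / 2 = ((2 * l + 2 * l * u₀)/2) * n by ring]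
    apply mul_le_mul_of_nonneg_right _ hN.le
    linarith [hlog]
  linarith [hmain, hlogn]

lemma gaussian_density_eq (l : ℝ) (x : ℝ) :
    gaussianPDFReal 0 1 x * Real.exp (l * x ^ 2)
      = (Real.sqrt (2 * π))⁻¹ * Real.exp (-(1/2 - l) * x ^ 2) := by
  rw [gaussianPDFReal]
  push_cast
  rw [mul_assoc, ← Real.exp_add]
  ring_nf

lemma integrable_gauss_exp {l : ℝ} (hl : l < 1/2) :
    Integrable (fun x => Real.exp (l * x ^ 2)) (gaussianReal 0 1) := by
  rw [gaussianReal_of_var_ne_zero 0 one_ne_zero]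
  have hpdf : gaussianPDF 0 1 = fun x => ((Real.toNNReal (gaussianPDFReal 0 1 x) : ℝ≥0) : ℝ≥0∞) := by
    ext x; rw [gaussianPDF]; rfl
  rw [hpdf]
  rw [integrable_withDensity_iff_integrable_smul ((measurable_gaussianPDFReal 0 1).real_toNNReal)]
  have h : (fun x => (Real.toNNReal (gaussianPDFReal 0 1 x) : ℝ) • Real.exp (l * x ^ 2))
      = fun x => (Real.sqrt (2 * π))⁻¹ * Real.exp (-(1/2 - l) * x ^ 2) := by
    ext x
    rw [smul_eq_mul, Real.coe_toNNReal _ (gaussianPDFReal_nonneg 0 1 x), gaussian_density_eq]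
  rw [show (fun x => (Real.toNNReal (gaussianPDFReal 0 1 x) : ℝ≥0) • Real.exp (l * x ^ 2))
      = (fun x => (Real.toNNReal (gaussianPDFReal 0 1 x) : ℝ) • Real.exp (l * x ^ 2)) from rfl, h]
  exact (integrable_exp_neg_mul_sq (by linarith)).const_mul _

lemma gauss_mgf {l : ℝ} (hl : l < 1/2) :
    ∫ x, Real.exp (l * x ^ 2) ∂(gaussianReal 0 1) = (Real.sqrt (1 - 2 * l))⁻¹ := by
  rw [gaussianReal_of_var_ne_zero 0 one_ne_zero]
  have hpdf : gaussianPDF 0 1 = fun x => ((Real.toNNReal (gaussianPDFReal 0 1 x) : ℝ≥0) : ℝ≥0∞) := by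
    ext x; rw [gaussianPDF]; rfl
  rw [hpdf, integral_withDensity_eq_integral_smul ((measurable_gaussianPDFReal 0 1).real_toNNReal)]
  have h : (fun x => (Real.toNNReal (gaussianPDFReal 0 1 x) : ℝ≥0) • Real.exp (l * x ^ 2))
      = fun x => (Real.sqrt (2 * π))⁻¹ * Real.exp (-(1/2 - l) * x ^ 2) := by
    ext x
    rw [NNReal.smul_def, smul_eq_mul, Real.coe_toNNReal _ (gaussianPDFReal_nonneg 0 1 x),
      gaussian_density_eq]
  rw [h, integral_const_mul, integral_gaussian]
  have hb : (0:ℝ) < 1/2 - l := by linarith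
  rw [← Real.sqrt_inv, ← Real.sqrt_mul (by positivity)]
  rw [eq_comm, inv_eq_iff_eq_inv, eq_comm]
  field_simp
  ring
  rw [Real.sqrt_inv, inv_inv]

lemma euclid_norm_sq {d : ℕ} (v : EuclideanSpace ℝ (Fin d)) : ‖v‖^2 = ∑ i, (v i)^2 := by
  rw [EuclideanSpace.norm_eq]
  rw [Real.sq_sqrt (by positivity)]
  simp [sq_abs]

lemma dir_deriv {d : ℕ} (f : EuclideanSpace ℝ (Fin d) → ℝ) (hdiff : Differentiable ℝ f)
    (z v : EuclideanSpace ℝ (Fin d)) (t : ℝ) :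
    HasDerivAt (fun t : ℝ => f (z + t • v)) ⟪gradient f (z + t • v), v⟫ t := by
  have hc : HasDerivAt (fun t : ℝ => z + t • v) v t := by
    simpa using ((hasDerivAt_id t).smul_const v).const_add z
  have hf := (hdiff (z + t • v)).hasFDerivAt
  have hcomp := hf.comp_hasDerivAt t hc
  have hgrad : fderiv ℝ f (z + t • v) v = ⟪gradient f (z + t • v), v⟫ := by
    have h := (hdiff (z + t • v)).hasGradientAt
    rw [hasGradientAt_iff_hasFDerivAt] at h
    rw [h.fderiv]; simp [InnerProductSpace.toDual_apply_apply]
  rw [hgrad] at hcomp; exact hcomp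

lemma taylor_abs {d : ℕ} (f : EuclideanSpace ℝ (Fin d) → ℝ) {L : ℝ} (hL : 0 < L)
    (hdiff : Differentiable ℝ f)
    (hlip : ∀ x y, ‖gradient f y - gradient f x‖ ≤ L * ‖y - x‖)
    (z v : EuclideanSpace ℝ (Fin d)) :
    |f (z + v) - f z - ⟪v, gradient f z⟫| ≤ L / 2 * ‖v‖ ^ 2 := by
  set φ : ℝ → ℝ := fun t => f (z + t • v) - t * ⟪v, gradient f z⟫ with hφ
  have hφ' : ∀ t : ℝ, HasDerivAt φ (⟪gradient f (z + t • v), v⟫ - ⟪v, gradient f z⟫) t := by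
    intro t
    exact (dir_deriv f hdiff z v t).sub
      (by simpa using (hasDerivAt_id t).mul_const ⟪v, gradient f z⟫)
  have hbound : ∀ t : ℝ, 0 ≤ t →
      |⟪gradient f (z + t • v), v⟫ - ⟪v, gradient f z⟫| ≤ L * t * ‖v‖ ^ 2 := by
    intro t ht
    have h1 : ⟪gradient f (z + t • v), v⟫ - ⟪v, gradient f z⟫
        = ⟪gradient f (z + t • v) - gradient f z, v⟫ := by
      rw [inner_sub_left, real_inner_comm v (gradient f z)]
    rw [h1]
    calc |⟪gradient f (z + t • v) - gradient f z, v⟫|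
        ≤ ‖gradient f (z + t • v) - gradient f z‖ * ‖v‖ := abs_real_inner_le_norm _ _
      _ ≤ (L * ‖z + t • v - z‖) * ‖v‖ := by
          gcongr; exact hlip z (z + t • v)
      _ = L * t * ‖v‖ ^ 2 := by
          rw [add_sub_cancel_left, norm_smul]
          simp [abs_of_nonneg ht]; ring
  have hub : f (z + v) - f z - ⟪v, gradient f z⟫ ≤ L / 2 * ‖v‖ ^ 2 := by
    set U : ℝ → ℝ := fun t => L / 2 * ‖v‖ ^ 2 * t ^ 2 - φ t with hU
    have hU' : ∀ t : ℝ, HasDerivAt U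
        (L / 2 * ‖v‖ ^ 2 * (2 * t) - (⟪gradient f (z + t • v), v⟫ - ⟪v, gradient f z⟫)) t := by
      intro t
      exact HasDerivAt.sub (by simpa using (hasDerivAt_pow 2 t).const_mul (L / 2 * ‖v‖ ^ 2)) (hφ' t)
    have mono : MonotoneOn U (Set.Icc (0:ℝ) 1) := by
      apply monotoneOn_of_deriv_nonneg (convex_Icc 0 1)
      · exact fun t _ => (hU' t).continuousAt.continuousWithinAt
      · intro t ht
        exact (hU' t).differentiableAt.differentiableWithinAt
      · intro t ht
        rw [interior_Icc] at ht
        rw [(hU' t).deriv]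
        have h2 := abs_le.mp (hbound t ht.1.le)
        nlinarith [h2.1, h2.2, sq_nonneg ‖v‖, ht.1.le, ht.2.le, hL.le]
    have := mono (Set.mem_Icc.mpr ⟨le_refl 0, zero_le_one⟩)
      (Set.mem_Icc.mpr ⟨zero_le_one, le_refl 1⟩) zero_le_one
    simp only [hU, hφ, zero_smul, one_smul, add_zero, zero_mul, one_mul, sub_zero,
      one_pow, mul_one, ne_eq, OfNat.ofNat_ne_zero, not_false_eq_true, zero_pow, mul_zero,
      zero_sub, neg_sub] at this
    linarith
  have hlb : -(L / 2 * ‖v‖ ^ 2) ≤ f (z + v) - f z - ⟪v, gradient f z⟫ := by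
    set V : ℝ → ℝ := fun t => L / 2 * ‖v‖ ^ 2 * t ^ 2 + φ t with hV
    have hV' : ∀ t : ℝ, HasDerivAt V
        (L / 2 * ‖v‖ ^ 2 * (2 * t) + (⟪gradient f (z + t • v), v⟫ - ⟪v, gradient f z⟫)) t := by
      intro t
      exact HasDerivAt.add (by simpa using (hasDerivAt_pow 2 t).const_mul (L / 2 * ‖v‖ ^ 2)) (hφ' t)
    have mono : MonotoneOn V (Set.Icc (0:ℝ) 1) := by
      apply monotoneOn_of_deriv_nonneg (convex_Icc 0 1)
      · exact fun t _ => (hV' t).continuousAt.continuousWithinAt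
      · intro t ht
        exact (hV' t).differentiableAt.differentiableWithinAt
      · intro t ht
        rw [interior_Icc] at ht
        rw [(hV' t).deriv]
        have h2 := abs_le.mp (hbound t ht.1.le)
        nlinarith [h2.1, h2.2, sq_nonneg ‖v‖, ht.1.le, ht.2.le, hL.le]
    have := mono (Set.mem_Icc.mpr ⟨le_refl 0, zero_le_one⟩)
      (Set.mem_Icc.mpr ⟨zero_le_one, le_refl 1⟩) zero_le_one
    simp only [hV, hφ, zero_smul, one_smul, add_zero, zero_mul, one_mul, sub_zero,
      one_pow, mul_one, ne_eq, OfNat.ofNat_ne_zero, not_false_eq_true, zero_pow, mul_zero,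
      zero_add] at this
    linarith
  rw [abs_le]; exact ⟨hlb, hub⟩

set_option maxHeartbeats 1000000 in
/-- **Accumulated smoothing error (Lemma `smoothing_event_convex` / stmt 12).**
Along the normalized two-point zeroth-order trajectory, with probability at least `1 − δ/2`
the accumulated finite-difference smoothing errors satisfy `Σ_{t<T} Δ_{α,t} ≤ A_{α,T}(δ)`. -/
theorem accumulated_smoothing_error
    {d : ℕ} (hd : 1 ≤ d)
    {Ω : Type*} [MeasurableSpace Ω] (P : Measure Ω) [IsProbabilityMeasure P]
    (f : EuclideanSpace ℝ (Fin d) → ℝ) (L : ℝ) (hL : 0 < L)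
    (hdiff : Differentiable ℝ f)
    (hlip : ∀ x y, ‖gradient f y - gradient f x‖ ≤ L * ‖y - x‖)
    (T : ℕ) (α : ℝ) (hα : 0 < α)
    (δ : ℝ) (hδ : 0 < δ) (hδ1 : δ < 1)
    (u : ℕ → Ω → EuclideanSpace ℝ (Fin d))
    (hu_meas : ∀ t, Measurable (u t))
    (hu_indep : iIndepFun
      (fun p : Fin T × Fin d => fun ω => u (p.1 : ℕ) ω p.2) P)
    (hu_law : ∀ t, t < T → ∀ i, Measure.map (fun ω => u t ω i) P = gaussianReal 0 1)
    (x₀ : EuclideanSpace ℝ (Fin d))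
    (x : ℕ → Ω → EuclideanSpace ℝ (Fin d)) (hx0 : ∀ ω, x 0 ω = x₀)
    (η : ℕ → Ω → ℝ) (hη : ∀ t ω, η t ω = 1 / (4 * L * ‖u t ω‖ ^ 2))
    (hstep : ∀ t ω, x (t + 1) ω = x t ω - η t ω •
      (((f (x t ω + α • u t ω) - f (x t ω - α • u t ω)) / (2 * α)) • u t ω))
    (β : ℕ → Ω → ℝ)
    (hβ : ∀ t ω, β t ω = (f (x t ω + α • u t ω) - f (x t ω - α • u t ω)) / (2 * α)
      - ⟪u t ω, gradient f (x t ω)⟫)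
    (Δα : ℕ → Ω → ℝ)
    (hΔ : ∀ t ω, Δα t ω = η t ω * β t ω ^ 2 / 2
      + L * η t ω ^ 2 * β t ω ^ 2 * ‖u t ω‖ ^ 2)
    (A : ℝ)
    (hA : A = L * α ^ 2 / 16 *
      ((d : ℝ) * T + 2 * Real.sqrt ((d : ℝ) * T * Real.log (2 / δ)) + 2 * Real.log (2 / δ))) :
    ENNReal.ofReal (1 - δ / 2) ≤
      P {ω | ∑ t ∈ Finset.range T, Δα t ω ≤ A} := by
  set τ : ℝ := Real.log (2 / δ) with hτdef
  have hτ : 0 < τ := Real.log_pos (by rw [lt_div_iff₀ hδ]; linarith)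
  -- pathwise bound on β
  have hβ_bound : ∀ t ω, |β t ω| ≤ L * α * ‖u t ω‖ ^ 2 / 2 := by
    intro t ω
    set y := x t ω
    set w := u t ω
    have ht1 := taylor_abs f hL hdiff hlip y (α • w)
    have ht2 := taylor_abs f hL hdiff hlip y (-(α • w))
    have hns : ‖α • w‖ ^ 2 = α ^ 2 * ‖w‖ ^ 2 := by
      rw [norm_smul]; simp [abs_of_pos hα]; ring
    have hinner : ⟪α • w, gradient f y⟫ = α * ⟪w, gradient f y⟫ := real_inner_smul_left _ _ _
    rw [hns] at ht1
    rw [show y + -(α • w) = y - α • w from (sub_eq_add_neg y (α • w)).symm, inner_neg_left, norm_neg, hns] at ht2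
    have h1 := abs_le.mp ht1
    have h2 := abs_le.mp ht2
    have hβeq : 2 * α * β t ω
        = (f (y + α • w) - f y - ⟪α • w, gradient f y⟫)
          - (f (y - α • w) - f y - -⟪α • w, gradient f y⟫) := by
      rw [hβ t ω, hinner]
      field_simp
      ring
    have habs : |2 * α * β t ω| ≤ L * α ^ 2 * ‖w‖ ^ 2 := by
      rw [hβeq]
      have := abs_sub (f (y + α • w) - f y - ⟪α • w, gradient f y⟫)
        (f (y - α • w) - f y - -⟪α • w, gradient f y⟫)
      calc |(f (y + α • w) - f y - ⟪α • w, gradient f y⟫)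
          - (f (y - α • w) - f y - -⟪α • w, gradient f y⟫)|
          ≤ |f (y + α • w) - f y - ⟪α • w, gradient f y⟫|
            + |f (y - α • w) - f y - -⟪α • w, gradient f y⟫| := abs_sub _ _
        _ ≤ L / 2 * (α ^ 2 * ‖w‖ ^ 2) + L / 2 * (α ^ 2 * ‖w‖ ^ 2) := by gcongr
        _ = L * α ^ 2 * ‖w‖ ^ 2 := by ring
    rw [abs_mul, abs_of_pos (by linarith : (0:ℝ) < 2 * α)] at habs
    rw [show L * α * ‖w‖ ^ 2 / 2 = (L * α ^ 2 * ‖w‖ ^ 2) / (2 * α) by field_simp]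
    rw [le_div_iff₀ (by linarith : (0:ℝ) < 2 * α)]
    linarith [habs]
  -- pathwise bound on Δ
  have hΔ_bound : ∀ t ω, Δα t ω ≤ L * α ^ 2 / 16 * ‖u t ω‖ ^ 2 := by
    intro t ω
    set w := u t ω
    set k := ‖w‖ ^ 2 with hkdef
    have hk0 : 0 ≤ k := sq_nonneg _
    rcases eq_or_lt_of_le hk0 with hk | hk
    · -- ‖w‖ = 0
      have hw0 : w = 0 := by
        rw [← norm_eq_zero]
        nlinarith [sq_nonneg ‖w‖, hk.symm ▸ (rfl : k = k)]
      have hβ0 : β t ω = 0 := by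
        rw [hβ t ω]
        show (f (x t ω + α • w) - f (x t ω - α • w)) / (2 * α) - ⟪w, gradient f (x t ω)⟫ = 0
        rw [hw0]
        simp
      rw [hΔ t ω]
      show η t ω * β t ω ^ 2 / 2 + L * η t ω ^ 2 * β t ω ^ 2 * k ≤ L * α ^ 2 / 16 * k
      rw [hβ0, ← hk]
      simp
    · have hb := hβ_bound t ω
      have hb2 : β t ω ^ 2 ≤ (L * α * k / 2) ^ 2 := by
        rw [← sq_abs (β t ω)]
        exact pow_le_pow_left₀ (abs_nonneg _) hb 2
      have hηeq : η t ω = 1 / (4 * L * k) := hη t ω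
      rw [hΔ t ω, hηeq]
      show 1 / (4 * L * k) * β t ω ^ 2 / 2 + L * (1 / (4 * L * k)) ^ 2 * β t ω ^ 2 * k
        ≤ L * α ^ 2 / 16 * k
      have hLk : (0:ℝ) < 4 * L * k := by positivity
      have heq : 1 / (4 * L * k) * β t ω ^ 2 / 2 + L * (1 / (4 * L * k)) ^ 2 * β t ω ^ 2 * k
          = 3 * β t ω ^ 2 / (16 * L * k) := by
        field_simp
        ring
      rw [heq, div_le_iff₀ (by positivity : (0:ℝ) < 16 * L * k)]
      nlinarith [hb2, hL, hk, sq_nonneg (β t ω)]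
  -- sum of Δ bounded by (L α²/16) * Σ ‖u‖²
  have hsum_bound : ∀ ω, ∑ t ∈ Finset.range T, Δα t ω
      ≤ L * α ^ 2 / 16 * ∑ t ∈ Finset.range T, ‖u t ω‖ ^ 2 := by
    intro ω
    rw [Finset.mul_sum]
    exact Finset.sum_le_sum fun t _ => hΔ_bound t ω
  set N : ℝ := (d : ℝ) * T with hNdef
  set Ub : ℝ := N + 2 * Real.sqrt (N * τ) + 2 * τ with hUbdef
  have hA' : A = L * α ^ 2 / 16 * Ub := hA
  set S : Ω → ℝ := fun ω => ∑ t ∈ Finset.range T, ‖u t ω‖ ^ 2 with hSdef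
  have hsub : {ω | S ω ≤ Ub} ⊆ {ω | ∑ t ∈ Finset.range T, Δα t ω ≤ A} := by
    intro ω hω
    simp only [Set.mem_setOf_eq] at hω ⊢
    calc ∑ t ∈ Finset.range T, Δα t ω ≤ L * α ^ 2 / 16 * S ω := hsum_bound ω
      _ ≤ L * α ^ 2 / 16 * Ub := by
          apply mul_le_mul_of_nonneg_left hω (by positivity)
      _ = A := hA'.symm
  rcases Nat.eq_zero_or_pos T with hT | hT
  · -- T = 0 : the event is everything
    have : {ω | ∑ t ∈ Finset.range T, Δα t ω ≤ A} = Set.univ := by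
      ext ω
      simp only [Set.mem_setOf_eq, Set.mem_univ, iff_true, hT, Finset.range_zero,
        Finset.sum_empty]
      rw [hA']
      have hUb0 : 0 ≤ Ub := by
        have hN0 : (0:ℝ) ≤ N := by rw [hNdef]; positivity
        have hs := Real.sqrt_nonneg (N * τ)
        rw [hUbdef]
        linarith
      exact mul_nonneg (by positivity) hUb0
    rw [this]
    simp only [measure_univ]
    exact ENNReal.ofReal_le_one.mpr (by linarith)
  -- T ≥ 1 : Chernoff bound on S
  have hn : 0 < T * d := Nat.mul_pos hT hd
  obtain ⟨l, hl, hl2, hchern⟩ := chernoff_numeric (T * d) hn hτ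
  have hcastN : ((T * d : ℕ) : ℝ) = N := by
    rw [hNdef]; push_cast; ring
  rw [hcastN] at hchern
  -- the coordinate variables
  set X : Fin T × Fin d → Ω → ℝ := fun p ω => (u (p.1 : ℕ) ω p.2) ^ 2 with hXdef
  have hXmeas : ∀ p, Measurable (X p) := fun p =>
    ((measurable_pi_apply p.2).comp ((WithLp.measurable_ofLp _ _).comp (hu_meas p.1))).pow_const 2
  have hXindep : iIndepFun X P := by
    have := hu_indep.comp (fun _ => fun y : ℝ => y ^ 2)
      (fun _ => measurable_id.pow_const 2)
    exact this
  -- integrability of exp(l * X p)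
  have hXint : ∀ p : Fin T × Fin d, Integrable (fun ω => Real.exp (l * X p ω)) P := by
    intro p
    have hlaw := hu_law p.1 p.1.isLt p.2
    have hcoord : Measurable (fun ω => u (p.1 : ℕ) ω p.2) :=
      (measurable_pi_apply p.2).comp ((WithLp.measurable_ofLp _ _).comp (hu_meas p.1))
    have hint := integrable_gauss_exp hl2
    rw [← hlaw] at hint
    have := (integrable_map_measure
      (by
        apply Measurable.aestronglyMeasurable
        exact (measurable_id.pow_const 2).const_mul l |>.exp)
      hcoord.aemeasurable).mp hint
    exact this
  -- mgf of each X p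
  have hXmgf : ∀ p : Fin T × Fin d, mgf (X p) P l = (Real.sqrt (1 - 2 * l))⁻¹ := by
    intro p
    have hlaw := hu_law p.1 p.1.isLt p.2
    have hcoord : Measurable (fun ω => u (p.1 : ℕ) ω p.2) :=
      (measurable_pi_apply p.2).comp ((WithLp.measurable_ofLp _ _).comp (hu_meas p.1))
    have : mgf (X p) P l = ∫ y, Real.exp (l * y ^ 2) ∂(gaussianReal 0 1) := by
      rw [← hlaw, integral_map hcoord.aemeasurable]
      · rfl
      · apply Measurable.aestronglyMeasurable
        exact (measurable_id.pow_const 2).const_mul l |>.exp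
    rw [this, gauss_mgf hl2]
  -- Chernoff bound
  have hSum_meas : Measurable (∑ p : Fin T × Fin d, X p) := by
    have h : (∑ p : Fin T × Fin d, X p) = fun ω => ∑ p : Fin T × Fin d, X p ω := by
      ext ω; simp [Finset.sum_apply]
    rw [h]
    exact Finset.measurable_sum _ (fun p _ => hXmeas p)
  have hint_sum : Integrable (fun ω => Real.exp (l * (∑ p : Fin T × Fin d, X p) ω)) P :=
    hXindep.integrable_exp_mul_sum hXmeas (fun p _ => hXint p)
  have hchernoff := measure_ge_le_exp_mul_mgf (X := ∑ p : Fin T × Fin d, X p)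
    (μ := P) Ub hl.le hint_sum
  have hmgf_sum : mgf (∑ p : Fin T × Fin d, X p) P l
      = ((Real.sqrt (1 - 2 * l))⁻¹) ^ (T * d) := by
    rw [hXindep.mgf_sum hXmeas]
    rw [Finset.prod_congr rfl (fun p _ => hXmgf p), Finset.prod_const]
    congr 1
    simp [Fintype.card_prod]
  rw [hmgf_sum] at hchernoff
  -- S = ∑ p, X p
  have hS_eq : ∀ ω, S ω = (∑ p : Fin T × Fin d, X p) ω := by
    intro ω
    rw [hSdef]
    simp only [Finset.sum_apply]
    rw [← Fin.sum_univ_eq_sum_range (fun t => ‖u t ω‖ ^ 2) T]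
    rw [Fintype.sum_prod_type]
    exact Finset.sum_congr rfl fun t _ => euclid_norm_sq (u t ω)
  -- measurability of S
  have hS_meas : Measurable S := by
    have : S = ∑ p : Fin T × Fin d, X p := funext hS_eq
    rw [this]
    exact hSum_meas
  have hGmeas : MeasurableSet {ω | S ω ≤ Ub} := measurableSet_le hS_meas measurable_const
  -- tail probability bound
  have htail : P {ω | S ω ≤ Ub}ᶜ ≤ ENNReal.ofReal (δ / 2) := by
    have hsubc : {ω | S ω ≤ Ub}ᶜ ⊆ {ω | Ub ≤ (∑ p : Fin T × Fin d, X p) ω} := by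
      intro ω hω
      simp only [Set.mem_compl_iff, Set.mem_setOf_eq, not_le] at hω
      simp only [Set.mem_setOf_eq, ← hS_eq ω]
      exact hω.le
    calc P {ω | S ω ≤ Ub}ᶜ ≤ P {ω | Ub ≤ (∑ p : Fin T × Fin d, X p) ω} := measure_mono hsubc
      _ = ENNReal.ofReal ((P {ω | Ub ≤ (∑ p : Fin T × Fin d, X p) ω}).toReal) :=
          (ENNReal.ofReal_toReal (measure_ne_top _ _)).symm
      _ ≤ ENNReal.ofReal (δ / 2) := by
          apply ENNReal.ofReal_le_ofReal
          calc (P {ω | Ub ≤ (∑ p : Fin T × Fin d, X p) ω}).toReal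
              ≤ Real.exp (-l * Ub) * ((Real.sqrt (1 - 2 * l))⁻¹) ^ (T * d) := hchernoff
            _ ≤ Real.exp (-τ) := hchern
            _ = δ / 2 := by
                rw [hτdef, ← Real.log_inv, Real.exp_log (by positivity), inv_div]
  -- conclude
  calc ENNReal.ofReal (1 - δ / 2) ≤ P {ω | S ω ≤ Ub} := by
        have hadd := measure_add_measure_compl (μ := P) hGmeas
        apply (ENNReal.add_le_add_iff_right (measure_ne_top P {ω | S ω ≤ Ub}ᶜ)).mp
        rw [hadd, measure_univ]
        calc ENNReal.ofReal (1 - δ / 2) + P {ω | S ω ≤ Ub}ᶜ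
            ≤ ENNReal.ofReal (1 - δ / 2) + ENNReal.ofReal (δ / 2) := add_le_add_right htail _
          _ = ENNReal.ofReal 1 := by
              rw [← ENNReal.ofReal_add (by linarith) (by linarith)]
              norm_num
          _ = 1 := by simp
    _ ≤ P {ω | ∑ t ∈ Finset.range T, Δα t ω ≤ A} := measure_mono hsub
end

section
/- Let T ≥ 1 and let h_0, h_1, …, h_T be nonnegative reals satisfying h_{t+1} ≤ h_t − a_t h_t² + ε_t for t = 0, …, T−1, where a_t ≥ 0 and ε_t ≥ 0. Set E = Σ_{t=0}^{T−1} ε_t. Then h_T ≤ 2E + ( 1/(h_0 + E) + (1/4) Σ_{t=0}^{T−1} a_t )^{−1}, with the convention that the inverse term is zero when h_0 + E = 0. -/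
open Finset
open scoped BigOperators

/-- **Perturbed convex-rate recursion (stmt 13).**
If nonnegative reals satisfy `h_{t+1} ≤ h_t − a_t h_t² + ε_t` with `a_t, ε_t ≥ 0`, then with
`E = Σ ε_t`, `h_T ≤ 2E + (1/(h_0+E) + (1/4) Σ a_t)⁻¹`, the inverse term being `0` when
`h_0 + E = 0`. -/
theorem perturbed_recursion
    (T : ℕ) (hT : 1 ≤ T) (h a ε : ℕ → ℝ)
    (hh : ∀ t, t ≤ T → 0 ≤ h t)
    (ha : ∀ t, t < T → 0 ≤ a t)
    (hε : ∀ t, t < T → 0 ≤ ε t)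
    (hrec : ∀ t, t < T → h (t + 1) ≤ h t - a t * h t ^ 2 + ε t) :
    h T ≤ 2 * (∑ t ∈ Finset.range T, ε t) +
      (if h 0 + ∑ t ∈ Finset.range T, ε t = 0 then 0
       else (1 / (h 0 + ∑ t ∈ Finset.range T, ε t)
              + 1 / 4 * ∑ t ∈ Finset.range T, a t)⁻¹) := by
  set E := ∑ t ∈ Finset.range T, ε t with hEdef
  have hEnn : 0 ≤ E := Finset.sum_nonneg fun t ht => hε t (Finset.mem_range.mp ht)
  have hann : 0 ≤ ∑ t ∈ Finset.range T, a t :=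
    Finset.sum_nonneg fun t ht => ha t (Finset.mem_range.mp ht)
  set M : ℕ → ℝ := fun t => h t + ∑ s ∈ Finset.Ico t T, ε s with hMdef
  have hMT : M T = h T := by simp [hMdef]
  have hM0 : M 0 = h 0 + E := by
    rw [hEdef, Finset.range_eq_Ico]
  -- tail sums are at most E
  have htail : ∀ t, ∑ s ∈ Finset.Ico t T, ε s ≤ E := by
    intro t
    have hsub : Finset.Ico t T ⊆ Finset.range T := by
      intro i hi
      simp only [Finset.mem_Ico, Finset.mem_range] at *
      omega
    rw [hEdef]
    exact Finset.sum_le_sum_of_subset_of_nonneg hsub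
      (fun i hi _ => hε i (Finset.mem_range.mp hi))
  have htailnn : ∀ t, 0 ≤ ∑ s ∈ Finset.Ico t T, ε s := by
    intro t
    exact Finset.sum_nonneg fun i hi => hε i (Finset.mem_Ico.mp hi).2
  -- one step decrease
  have hstep : ∀ t, t < T → M (t + 1) ≤ M t - a t * h t ^ 2 := by
    intro t ht
    have hsplit : ∑ s ∈ Finset.Ico t T, ε s = ε t + ∑ s ∈ Finset.Ico (t + 1) T, ε s :=
      Finset.sum_eq_sum_Ico_succ_bot ht _
    have := hrec t ht
    simp only [hMdef]
    linarith
  have hdec : ∀ t, t < T → M (t + 1) ≤ M t := by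
    intro t ht
    have h1 := hstep t ht
    have h2 : 0 ≤ a t * h t ^ 2 := mul_nonneg (ha t ht) (sq_nonneg _)
    linarith
  -- M T ≤ M t for all t ≤ T
  have hmono : ∀ d t, t + d ≤ T → M (t + d) ≤ M t := by
    intro d
    induction d with
    | zero => intro t _; simp
    | succ d ih =>
      intro t hdt
      have h1 : M (t + d + 1) ≤ M (t + d) := hdec (t + d) (by omega)
      have h2 : M (t + d) ≤ M t := ih t (by omega)
      calc M (t + (d + 1)) = M (t + d + 1) := by ring_nf
        _ ≤ M t := h1.trans h2
  have hMTle : ∀ t, t ≤ T → M T ≤ M t := by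
    intro t ht
    have := hmono (T - t) t (by omega)
    rwa [show t + (T - t) = T by omega] at this
  clear_value M E
  rcases le_or_gt (h T) (2 * E) with hcase | hcase
  · -- trivial case: inverse term is nonneg
    have : (0:ℝ) ≤ (if h 0 + E = 0 then 0
       else (1 / (h 0 + E) + 1 / 4 * ∑ t ∈ Finset.range T, a t)⁻¹) := by
      split_ifs with h0
      · exact le_rfl
      · have h0nn : 0 ≤ h 0 + E := add_nonneg (hh 0 (by omega)) hEnn
        exact inv_nonneg.mpr (add_nonneg (one_div_nonneg.mpr h0nn)
          (mul_nonneg (by norm_num) hann))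
    linarith
  · -- main case : h T > 2E, so all M t > 2E and h t ≥ M t / 2
    have hMgt : ∀ t, t ≤ T → 2 * E < M t := fun t ht => by
      have := hMTle t ht; rw [hMT] at this; linarith
    have hMpos : ∀ t, t ≤ T → 0 < M t := fun t ht => lt_of_le_of_lt (by linarith) (hMgt t ht)
    have hhalf : ∀ t, t ≤ T → M t / 2 ≤ h t := by
      intro t ht
      have h1 := htail t
      have h2 := hMgt t ht
      have h3 : h t = M t - ∑ s ∈ Finset.Ico t T, ε s := by simp [hMdef]
      linarith
    -- key induction : 1 / M 0 + (1/4) Σ_{s<t} a ≤ 1 / M t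
    have hkey : ∀ t, t ≤ T →
        1 / M 0 + 1 / 4 * ∑ s ∈ Finset.range t, a s ≤ 1 / M t := by
      intro t
      induction t with
      | zero => intro _; simp
      | succ t ih =>
        intro ht
        have ht' : t < T := by omega
        have ihv := ih (by omega)
        have hm : 0 < M t := hMpos t (by omega)
        have hm' : 0 < M (t + 1) := hMpos (t + 1) ht
        have hmm : M (t + 1) ≤ M t := hdec t ht'
        have hht : M t / 2 ≤ h t := hhalf t (by omega)
        have hst : M (t + 1) ≤ M t - a t * h t ^ 2 := hstep t ht'
        have ha0 : 0 ≤ a t := ha t ht'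
        have hhtnn : 0 ≤ h t := hh t (by omega)
        -- a t * h t ^ 2 ≥ a t * (M t)^2 / 4
        have hsq : M t ^ 2 / 4 ≤ h t ^ 2 := by
          nlinarith [mul_nonneg (sub_nonneg.mpr hht) (by linarith : (0:ℝ) ≤ h t + M t / 2)]
        have h1 : a t * (M t ^ 2 / 4) ≤ a t * h t ^ 2 :=
          mul_le_mul_of_nonneg_left hsq ha0
        have h2 : a t * (M (t + 1) * M t) ≤ a t * (M t * M t) :=
          mul_le_mul_of_nonneg_left (mul_le_mul_of_nonneg_right hmm hm.le) ha0
        have hpow : M t ^ 2 = M t * M t := pow_two (M t)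
        have hdiff : a t / 4 * (M (t + 1) * M t) ≤ M t - M (t + 1) := by
          nlinarith
        have hfrac : a t / 4 ≤ (M t - M (t + 1)) / (M (t + 1) * M t) := by
          rw [le_div_iff₀ (by positivity)]
          exact hdiff
        have heq : 1 / M (t + 1) - 1 / M t = (M t - M (t + 1)) / (M (t + 1) * M t) := by
          field_simp
        rw [Finset.sum_range_succ]
        linarith
    have hfin := hkey T le_rfl
    rw [hMT, hM0] at hfin
    have hTpos : 0 < h T := by linarith
    have hM0pos : 0 < h 0 + E := by rw [← hM0]; exact hMpos 0 (by omega)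
    rw [if_neg (by positivity)]
    have hcpos : 0 < 1 / (h 0 + E) + 1 / 4 * ∑ t ∈ Finset.range T, a t := by positivity
    have h1 : 1 / (1 / h T) ≤ 1 / (1 / (h 0 + E) + 1 / 4 * ∑ t ∈ Finset.range T, a t) :=
      one_div_le_one_div_of_le hcpos hfin
    rw [one_div_one_div] at h1
    rw [one_div] at h1
    linarith
end
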